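/- arXiv:1806.10020 — 6 statements merged into one kernel-verified Lean document; each statement's English description precedes it below -/
import Mathlib

section
/- If λ ∈ ℂ satisfies (|λ - r₁|⋯|λ - r_l|)^{1/l} > (|s₁|⋯|s_{l'}|)^{1/l'}, then the operator B - λI is boundedly invertible on c₀; i.e., λ belongs to the resolvent set of B acting on c₀. -/
open Filter Topology
open Fin.NatCast

namespace Stmt2Aux

noncomputable section

abbrev E := ZeroAtInftyContinuousMap ℕ ℂ

def c0mk (f : ℕ → ℂ) (hf : Tendsto f (cocompact ℕ) (𝓝 0)) : E :=
  ⟨⟨f, continuous_of_discreteTopology⟩, hf⟩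

@[simp] lemma c0mk_apply (f : ℕ → ℂ) (hf) (k : ℕ) : c0mk f hf k = f k := rfl

lemma norm_apply_le (x : E) (k : ℕ) : ‖x k‖ ≤ ‖x‖ := by
  rw [← ZeroAtInftyContinuousMap.norm_toBCF_eq_norm]
  exact x.toBCF.norm_coe_le_norm k

lemma norm_le_of (x : E) {C : ℝ} (h0 : 0 ≤ C) (h : ∀ k, ‖x k‖ ≤ C) : ‖x‖ ≤ C := by
  rw [← ZeroAtInftyContinuousMap.norm_toBCF_eq_norm]
  exact (BoundedContinuousFunction.norm_le h0).mpr h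

lemma tendsto_mul_zero (g : ℕ → ℂ) {C : ℝ} (hg : ∀ k, ‖g k‖ ≤ C) (x : E) :
    Tendsto (fun k => g k * x k) (cocompact ℕ) (𝓝 0) := by
  have hx : Tendsto (fun k => C * ‖x k‖) (cocompact ℕ) (𝓝 0) := by
    have := (x.zero_at_infty').norm
    simpa using this.const_mul C
  exact squeeze_zero_norm (fun k => by
    rw [norm_mul]
    exact mul_le_mul_of_nonneg_right (hg k) (norm_nonneg _)) hx

def diagL (g : ℕ → ℂ) (C : ℝ) (hg : ∀ k, ‖g k‖ ≤ C) : E →L[ℂ] E :=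
  LinearMap.mkContinuous
    { toFun := fun x => c0mk (fun k => g k * x k) (tendsto_mul_zero g hg x)
      map_add' := fun x y => by ext k; simp [mul_add]
      map_smul' := fun c x => by ext k; simp; ring }
    C (fun x => norm_le_of _ (mul_nonneg (le_trans (norm_nonneg _) (hg 0)) (norm_nonneg _))
      (fun k => by
        simp only [c0mk_apply, LinearMap.coe_mk, AddHom.coe_mk, norm_mul]
        exact mul_le_mul (hg k) (norm_apply_le x k) (norm_nonneg _)
          (le_trans (norm_nonneg _) (hg 0))))

@[simp] lemma diagL_apply (g : ℕ → ℂ) (C : ℝ) (hg) (x : E) (k : ℕ) :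
    diagL g C hg x k = g k * x k := rfl

def shiftFun (w : ℕ → ℂ) (x : ℕ → ℂ) : ℕ → ℂ := fun k =>
  match k with
  | 0 => 0
  | (m+1) => w m * x m

lemma tendsto_shift_zero (w : ℕ → ℂ) {C : ℝ} (hw : ∀ k, ‖w k‖ ≤ C) (x : E) :
    Tendsto (shiftFun w x) (cocompact ℕ) (𝓝 0) := by
  rw [cocompact_eq_atTop]
  rw [← tendsto_add_atTop_iff_nat 1]
  have hx : Tendsto (fun k => C * ‖x k‖) atTop (𝓝 0) := by
    have := (x.zero_at_infty').norm
    rw [cocompact_eq_atTop] at this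
    simpa using this.const_mul C
  exact squeeze_zero_norm (fun k => by
    show ‖w k * x k‖ ≤ C * ‖x k‖
    rw [norm_mul]
    exact mul_le_mul_of_nonneg_right (hw k) (norm_nonneg _)) hx

def shiftL (w : ℕ → ℂ) (C : ℝ) (hw : ∀ k, ‖w k‖ ≤ C) : E →L[ℂ] E :=
  LinearMap.mkContinuous
    { toFun := fun x => c0mk (shiftFun w x) (tendsto_shift_zero w hw x)
      map_add' := fun x y => by
        ext k
        cases k with
        | zero => simp [shiftFun]
        | succ m => simp [shiftFun, mul_add]
      map_smul' := fun c x => by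
        ext k
        cases k with
        | zero => simp [shiftFun]
        | succ m => simp [shiftFun]; ring }
    C (fun x => norm_le_of _ (mul_nonneg (le_trans (norm_nonneg _) (hw 0)) (norm_nonneg _))
      (fun k => by
        cases k with
        | zero =>
          simp only [c0mk_apply, LinearMap.coe_mk, AddHom.coe_mk, shiftFun, norm_zero]
          exact mul_nonneg (le_trans (norm_nonneg _) (hw 0)) (norm_nonneg _)
        | succ m =>
          show ‖w m * x m‖ ≤ C * ‖x‖
          rw [norm_mul]
          exact mul_le_mul (hw m) (norm_apply_le x m) (norm_nonneg _)
            (le_trans (norm_nonneg _) (hw 0))))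

@[simp] lemma shiftL_apply_zero (w : ℕ → ℂ) (C : ℝ) (hw) (x : E) :
    shiftL w C hw x 0 = 0 := rfl

@[simp] lemma shiftL_apply_succ (w : ℕ → ℂ) (C : ℝ) (hw) (x : E) (m : ℕ) :
    shiftL w C hw x (m + 1) = w m * x m := rfl

lemma shift_pow_apply_add (w : ℕ → ℂ) (C : ℝ) (hw) (n : ℕ) :
    ∀ (x : E) (m : ℕ),
      ((shiftL w C hw) ^ n) x (m + n) = (∏ i ∈ Finset.range n, w (m + i)) * x m := by
  induction n with
  | zero => intro x m; simp
  | succ n ih =>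
    intro x m
    rw [pow_succ, ContinuousLinearMap.mul_apply]
    have harith : m + (n + 1) = (m + 1) + n := by omega
    rw [harith, ih (shiftL w C hw x) (m + 1), shiftL_apply_succ]
    rw [Finset.prod_range_succ']
    have : ∀ i, m + (i + 1) = m + 1 + i := fun i => by omega
    rw [show (∏ i ∈ Finset.range n, w (m + (i + 1))) = ∏ i ∈ Finset.range n, w (m + 1 + i) from
      Finset.prod_congr rfl (fun i _ => by rw [this i])]
    rw [add_zero]
    ring

lemma shift_pow_apply_lt (w : ℕ → ℂ) (C : ℝ) (hw) (n : ℕ) :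
    ∀ (x : E) (k : ℕ), k < n → ((shiftL w C hw) ^ n) x k = 0 := by
  induction n with
  | zero => intro x k hk; omega
  | succ n ih =>
    intro x k hk
    rw [pow_succ, ContinuousLinearMap.mul_apply]
    rcases Nat.lt_or_ge k n with h | h
    · exact ih _ k h
    · rw [show k = n from by omega]
      have h0 := shift_pow_apply_add w C hw n (shiftL w C hw x) 0
      rw [zero_add] at h0
      rw [h0, shiftL_apply_zero, mul_zero]

lemma shift_pow_norm_le (w : ℕ → ℂ) (C : ℝ) (hw) (n : ℕ) (Cn : ℝ)
    (hCn : ∀ m, (∏ i ∈ Finset.range n, ‖w (m + i)‖) = Cn) :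
    ‖(shiftL w C hw) ^ n‖ ≤ Cn := by
  have hCn0 : 0 ≤ Cn := by
    rw [← hCn 0]
    exact Finset.prod_nonneg fun i _ => norm_nonneg _
  refine ContinuousLinearMap.opNorm_le_bound _ hCn0 (fun x => ?_)
  refine norm_le_of _ (mul_nonneg hCn0 (norm_nonneg _)) (fun k => ?_)
  rcases Nat.lt_or_ge k n with h | h
  · rw [shift_pow_apply_lt w C hw n x k h, norm_zero]
    exact mul_nonneg hCn0 (norm_nonneg _)
  · obtain ⟨m, rfl⟩ : ∃ m, k = m + n := ⟨k - n, by omega⟩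
    rw [shift_pow_apply_add, norm_mul]
    have : ‖∏ i ∈ Finset.range n, w (m + i)‖ = Cn := by
      rw [← hCn m, norm_prod]
    rw [this]
    exact mul_le_mul_of_nonneg_left (norm_apply_le x m) hCn0

end


lemma prod_period {p : ℕ} [NeZero p] (F : Fin p → ℝ) (m : ℕ) :
    ∏ i ∈ Finset.range p, F ↑(m + i) = ∏ j, F j := by
  rw [← Fin.prod_univ_eq_prod_range (fun i => F ↑(m + i)) p]
  have h : ∀ i : Fin p, ((m + (i : ℕ) : ℕ) : Fin p) = (m : Fin p) + i := by
    intro i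
    simp [Nat.cast_add, Fin.cast_val_eq_self]
  simp_rw [h]
  exact Equiv.prod_comp (Equiv.addLeft (m : Fin p)) F

lemma prod_periods {p : ℕ} [NeZero p] (F : Fin p → ℝ) (c m : ℕ) :
    ∏ i ∈ Finset.range (c * p), F ↑(m + i) = (∏ j, F j) ^ c := by
  induction c with
  | zero => simp
  | succ c ih =>
    rw [Nat.succ_mul, Finset.prod_range_add, ih, pow_succ]
    congr 1
    rw [← prod_period F (m + c * p)]
    exact Finset.prod_congr rfl fun i _ => by
      rw [show m + (c * p + i) = m + c * p + i from by omega]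


lemma key_unit {R : Type*} [NormedRing R] [CompleteSpace R]
    (A D D' N : R) (hDD' : D * D' = 1) (hD'D : D' * D = 1)
    (hA : A + D * N = D) (n : ℕ) (hn : ‖N ^ n‖ < 1) : IsUnit A := by
  have hD : IsUnit D := ⟨⟨D, D', hDD', hD'D⟩, rfl⟩
  have hA' : A = D * (1 - N) := by
    rw [mul_sub, mul_one]
    exact eq_sub_of_add_eq hA
  set S : R := ∑ i ∈ Finset.range n, N ^ i with hS_def
  have hS1 : (1 - N) * S = 1 - N ^ n := by
    calc (1 - N) * S = -((N - 1) * S) := by rw [← neg_mul, neg_sub]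
      _ = 1 - N ^ n := by rw [hS_def, mul_geom_sum, neg_sub]
  have hS2 : S * (1 - N) = 1 - N ^ n := by
    calc S * (1 - N) = -(S * (N - 1)) := by rw [← mul_neg, neg_sub]
      _ = 1 - N ^ n := by rw [hS_def, geom_sum_mul, neg_sub]
  let u : Rˣ := Units.oneSub (N ^ n) hn
  have hu : (u : R) = 1 - N ^ n := rfl
  have hc0 : Commute (1 - N) ((1 : R) - N ^ n) :=
    (Commute.one_right (1 - N)).sub_right
      (Commute.sub_left (Commute.one_left (N ^ n)) ((Commute.refl N).pow_right n))
  have hcu : Commute (1 - N) (u : R) := hu ▸ hc0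
  have hc : Commute (1 - N) ((u⁻¹ : Rˣ) : R) := hcu.units_inv_right
  have hNunit : IsUnit ((1 : R) - N) := by
    refine ⟨⟨1 - N, S * ↑u⁻¹, ?_, ?_⟩, rfl⟩
    · rw [← mul_assoc, hS1, ← hu]
      exact u.mul_inv
    · calc S * ↑u⁻¹ * (1 - N) = S * (↑u⁻¹ * (1 - N)) := mul_assoc _ _ _
        _ = S * ((1 - N) * ↑u⁻¹) := by rw [← hc.eq]
        _ = S * (1 - N) * ↑u⁻¹ := (mul_assoc _ _ _).symm
        _ = ↑u * ↑u⁻¹ := by rw [hS2, hu]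
        _ = 1 := u.mul_inv
  rw [hA']
  exact hD.mul hNunit

end Stmt2Aux

set_option maxHeartbeats 1000000 in
open Filter Topology Stmt2Aux in
/-- If `(|λ-r₁|⋯|λ-r_l|)^{1/l} > (|s₁|⋯|s_{l'}|)^{1/l'}`, then `λ` belongs to
the resolvent set of the operator `B` on `c₀`. -/
theorem stmt_2 (l l' : ℕ) [NeZero l] [NeZero l'] (r : Fin l → ℂ) (s : Fin l' → ℂ)
    (hs : ∀ j, s j ≠ 0)
    (B : ZeroAtInftyContinuousMap ℕ ℂ →L[ℂ] ZeroAtInftyContinuousMap ℕ ℂ)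
    (hB0 : ∀ x : ZeroAtInftyContinuousMap ℕ ℂ, B x 0 = r 0 * x 0)
    (hB : ∀ (x : ZeroAtInftyContinuousMap ℕ ℂ) (k : ℕ),
      B x (k + 1) = s (↑k) * x k + r (↑(k + 1)) * x (k + 1))
    (lam : ℂ)
    (hlam : (∏ j, ‖s j‖) ^ ((1 : ℝ) / l') <
      (∏ i, ‖lam - r i‖) ^ ((1 : ℝ) / l)) :
    lam ∉ spectrum ℂ B := by
  classical
  have hl : (l : ℝ) ≠ 0 := Nat.cast_ne_zero.mpr (NeZero.ne l)
  have hl' : (l' : ℝ) ≠ 0 := Nat.cast_ne_zero.mpr (NeZero.ne l')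
  set a : ℝ := ∏ j, ‖s j‖ with ha_def
  set b : ℝ := ∏ i, ‖lam - r i‖ with hb_def
  have ha : 0 < a := Finset.prod_pos fun j _ => norm_pos_iff.mpr (hs j)
  have hb0 : (0 : ℝ) ≤ b := Finset.prod_nonneg fun i _ => norm_nonneg _
  have hb : 0 < b := by
    rcases hb0.lt_or_eq with h | h
    · exact h
    · rw [← h, Real.zero_rpow (one_div_ne_zero hl)] at hlam
      linarith [Real.rpow_pos_of_pos ha ((1 : ℝ) / l')]
  have hne : ∀ i : Fin l, lam - r i ≠ 0 := by
    intro i h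
    have : b = 0 := Finset.prod_eq_zero (Finset.mem_univ i) (by rw [h, norm_zero])
    linarith
  -- key power inequality
  have key : a ^ l < b ^ l' := by
    have h1 : (a ^ ((1 : ℝ) / l')) ^ (l * l') = a ^ l := by
      rw [← Real.rpow_natCast (a ^ ((1 : ℝ) / l')) (l * l'), ← Real.rpow_mul ha.le,
        ← Real.rpow_natCast a l]
      congr 1
      push_cast
      field_simp
      try ring
    have h2 : (b ^ ((1 : ℝ) / l)) ^ (l * l') = b ^ l' := by
      rw [← Real.rpow_natCast (b ^ ((1 : ℝ) / l)) (l * l'), ← Real.rpow_mul hb.le,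
        ← Real.rpow_natCast b l']
      congr 1
      push_cast
      field_simp
      try ring
    calc a ^ l = (a ^ ((1 : ℝ) / l')) ^ (l * l') := h1.symm
      _ < (b ^ ((1 : ℝ) / l)) ^ (l * l') := by
          exact pow_lt_pow_left₀ hlam (Real.rpow_nonneg ha.le _)
            (Nat.mul_ne_zero (NeZero.ne l) (NeZero.ne l'))
      _ = b ^ l' := h2
  -- the operators
  set d : ℕ → ℂ := fun k => lam - r (↑k) with hd_def
  have hdne : ∀ k, d k ≠ 0 := fun k => hne _
  have hCd : ∀ k, ‖d k‖ ≤ ∑ i, ‖lam - r i‖ := fun k =>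
    Finset.single_le_sum (f := fun i : Fin l => ‖lam - r i‖)
      (fun i _ => norm_nonneg _) (Finset.mem_univ _)
  have hCd' : ∀ k, ‖(d k)⁻¹‖ ≤ ∑ i, ‖(lam - r i)⁻¹‖ := fun k =>
    Finset.single_le_sum (f := fun i : Fin l => ‖(lam - r i)⁻¹‖)
      (fun i _ => norm_nonneg _) (Finset.mem_univ _)
  have hCs : ∀ k : ℕ, ‖s (↑k : Fin l')‖ ≤ ∑ j, ‖s j‖ := fun k =>
    Finset.single_le_sum (f := fun j : Fin l' => ‖s j‖)
      (fun j _ => norm_nonneg _) (Finset.mem_univ _)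
  set w : ℕ → ℂ := fun k => s ↑k * (d (k + 1))⁻¹ with hw_def
  have hCw : ∀ k, ‖w k‖ ≤ (∑ j, ‖s j‖) * ∑ i, ‖(lam - r i)⁻¹‖ := by
    intro k
    show ‖s (↑k : Fin l') * (d (k + 1))⁻¹‖ ≤ _
    rw [norm_mul]
    exact mul_le_mul (hCs k) (hCd' (k + 1)) (norm_nonneg _)
      (le_trans (norm_nonneg _) (hCs 0))
  set D : E →L[ℂ] E := diagL d _ hCd with hD_def
  set D' : E →L[ℂ] E := diagL (fun k => (d k)⁻¹) _ hCd' with hD'_def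
  set N : E →L[ℂ] E := shiftL w _ hCw with hN_def
  set n : ℕ := l * l' with hn_def
  -- product of weights over a window of length n is constant
  have hprod : ∀ m, (∏ i ∈ Finset.range n, ‖w (m + i)‖) = a ^ l * (b ^ l')⁻¹ := by
    intro m
    have hsplit : (∏ i ∈ Finset.range n, ‖w (m + i)‖) =
        (∏ i ∈ Finset.range n, ‖s (↑(m + i) : Fin l')‖) *
          ∏ i ∈ Finset.range n, ‖(lam - r (↑(m + 1 + i) : Fin l))⁻¹‖ := by
      rw [← Finset.prod_mul_distrib]
      refine Finset.prod_congr rfl fun i _ => ?_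
      rw [show m + 1 + i = m + i + 1 from by omega]
      show ‖s (↑(m + i) : Fin l') * (d (m + i + 1))⁻¹‖ = _
      rw [norm_mul]
    rw [hsplit]
    have h1 : (∏ i ∈ Finset.range n, ‖s (↑(m + i) : Fin l')‖) = a ^ l := by
      rw [hn_def]
      exact prod_periods (fun j : Fin l' => ‖s j‖) l m
    have h2 : (∏ i ∈ Finset.range n, ‖(lam - r (↑(m + 1 + i) : Fin l))⁻¹‖) = (b ^ l')⁻¹ := by
      rw [hn_def, mul_comm l l']
      rw [prod_periods (fun j : Fin l => ‖(lam - r j)⁻¹‖) l' (m + 1)]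
      rw [show (∏ j : Fin l, ‖(lam - r j)⁻¹‖) = b⁻¹ by
        rw [hb_def, ← Finset.prod_inv_distrib]
        exact Finset.prod_congr rfl fun j _ => norm_inv _]
      rw [inv_pow]
    rw [h1, h2]
  have hCnlt : a ^ l * (b ^ l')⁻¹ < 1 := by
    rw [← div_eq_mul_inv, div_lt_one (pow_pos hb l')]
    exact key
  have hNn : ‖N ^ n‖ < 1 :=
    lt_of_le_of_lt (shift_pow_norm_le w _ hCw n _ hprod) hCnlt
  -- algebraic identity : (algebraMap lam - B) + D * N = D
  have hA : (algebraMap ℂ (E →L[ℂ] E) : ℂ →+* (E →L[ℂ] E)) lam - B + D * N = D := by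
    ext x k
    rw [ContinuousLinearMap.add_apply, ContinuousLinearMap.sub_apply,
      ContinuousLinearMap.mul_apply, ContinuousLinearMap.algebraMap_apply]
    have hsub : ∀ (f g : E) (j : ℕ), (f - g) j = f j - g j := fun f g j => rfl
    have hadd : ∀ (f g : E) (j : ℕ), (f + g) j = f j + g j := fun f g j => rfl
    rw [hadd, hsub]
    cases k with
    | zero =>
      have hx : (lam • x) 0 = lam * x 0 := rfl
      rw [hx, hB0]
      show lam * x 0 - r 0 * x 0 + d 0 * (shiftFun w x 0) = d 0 * x 0
      show lam * x 0 - r 0 * x 0 + d 0 * 0 = d 0 * x 0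
      show lam * x 0 - r 0 * x 0 + d 0 * 0 = (lam - r (↑(0 : ℕ) : Fin l)) * x 0
      rw [Nat.cast_zero]
      ring
    | succ k =>
      have hx : (lam • x) (k + 1) = lam * x (k + 1) := rfl
      rw [hx, hB x k]
      show lam * x (k + 1) - (s ↑k * x k + r ↑(k + 1) * x (k + 1)) + d (k + 1) * (w k * x k) =
        d (k + 1) * x (k + 1)
      have hwc : d (k + 1) * (w k * x k) = s ↑k * x k := by
        show d (k + 1) * (s ↑k * (d (k + 1))⁻¹ * x k) = s ↑k * x k
        rw [show d (k + 1) * (s ↑k * (d (k + 1))⁻¹ * x k)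
            = d (k + 1) * (d (k + 1))⁻¹ * (s ↑k * x k) from by ring,
          mul_inv_cancel₀ (hdne (k + 1)), one_mul]
      rw [hwc]
      show lam * x (k + 1) - (s ↑k * x k + r ↑(k + 1) * x (k + 1)) + s ↑k * x k =
        (lam - r ↑(k + 1)) * x (k + 1)
      ring
  -- D is a unit
  have hDD' : D * D' = 1 := by
    ext x k
    rw [ContinuousLinearMap.mul_apply, ContinuousLinearMap.one_apply]
    show d k * ((d k)⁻¹ * x k) = x k
    rw [← mul_assoc, mul_inv_cancel₀ (hdne k), one_mul]
  have hD'D : D' * D = 1 := by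
    ext x k
    rw [ContinuousLinearMap.mul_apply, ContinuousLinearMap.one_apply]
    show (d k)⁻¹ * (d k * x k) = x k
    rw [← mul_assoc, inv_mul_cancel₀ (hdne k), one_mul]
  rw [spectrum.notMem_iff]
  exact key_unit ((algebraMap ℂ (E →L[ℂ] E) : ℂ →+* (E →L[ℂ] E)) lam - B) D D' N hDD' hD'D hA n hNn
end

section
/- The spectrum of the operator B on c₀ equals the set S = {λ ∈ ℂ : (|λ - r₁|⋯|λ - r_l|)^{1/l} ≤ (|s₁|⋯|s_{l'}|)^{1/l'}}. -/
open Filter Topology Finset Fin.NatCast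

noncomputable section SpectrumAux

namespace SpectrumAux3

abbrev E := ZeroAtInftyContinuousMap ℕ ℂ

def mkE (f : ℕ → ℂ) (h : Tendsto f atTop (𝓝 0)) : E :=
  ⟨⟨f, continuous_of_discreteTopology⟩, by
    simpa [Filter.cocompact_eq_cofinite, Nat.cofinite_eq_atTop] using h⟩

lemma tendsto_coe (x : E) : Tendsto (fun k => x k) atTop (𝓝 0) := by
  simpa [Filter.cocompact_eq_cofinite, Nat.cofinite_eq_atTop] using x.zero_at_infty'

lemma apply_le_norm (x : E) (k : ℕ) : ‖x k‖ ≤ ‖x‖ :=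
  BoundedContinuousFunction.norm_coe_le_norm x.toBCF k

lemma norm_le_of (x : E) {C : ℝ} (hC : 0 ≤ C) (h : ∀ k, ‖x k‖ ≤ C) : ‖x‖ ≤ C := by
  rw [← ZeroAtInftyContinuousMap.norm_toBCF_eq_norm]
  exact BoundedContinuousFunction.norm_le hC |>.2 h

/-- multiplication operator by a bounded sequence -/
def mulOp (f : ℕ → ℂ) (C : ℝ) (hf : ∀ k, ‖f k‖ ≤ C) : E →L[ℂ] E :=
  LinearMap.mkContinuous
    { toFun := fun x => mkE (fun k => f k * x k) (by
        have h0 : Tendsto (fun k => ‖x k‖ * C) atTop (𝓝 0) := by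
          simpa using ((tendsto_coe x).norm.mul_const C)
        refine tendsto_zero_iff_norm_tendsto_zero.2 ?_
        refine squeeze_zero (fun k => norm_nonneg _) (fun k => ?_) h0
        rw [norm_mul, mul_comm]
        exact mul_le_mul_of_nonneg_left (hf k) (norm_nonneg _)),
      map_add' := fun x y => by ext k; simp [mkE, mul_add],
      map_smul' := fun c x => by ext k; simp [mkE]; ring }
    C (fun x => by
      have hC : 0 ≤ C := le_trans (norm_nonneg _) (hf 0)
      refine norm_le_of _ (by positivity) (fun k => ?_)
      calc ‖f k * x k‖ ≤ C * ‖x k‖ := by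
            rw [norm_mul]; exact mul_le_mul_of_nonneg_right (hf k) (norm_nonneg _)
        _ ≤ C * ‖x‖ := mul_le_mul_of_nonneg_left (apply_le_norm x k) hC)

@[simp] lemma mulOp_apply (f : ℕ → ℂ) (C : ℝ) (hf) (x : E) (k : ℕ) :
    mulOp f C hf x k = f k * x k := rfl

/-- weighted shift -/
def shiftOp (w : ℕ → ℂ) (C : ℝ) (hw : ∀ k, ‖w k‖ ≤ C) : E →L[ℂ] E :=
  LinearMap.mkContinuous
    { toFun := fun x => mkE (fun k => Nat.rec 0 (fun j _ => w j * x j) k) (by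
        refine tendsto_zero_iff_norm_tendsto_zero.2 ?_
        have h1 : Tendsto (fun k => ‖x k‖ * C) atTop (𝓝 0) := by
          simpa using ((tendsto_coe x).norm.mul_const C)
        have h2 : Tendsto (fun k : ℕ => ‖x (k-1)‖ * C) atTop (𝓝 0) :=
          h1.comp (tendsto_sub_atTop_nat 1)
        refine squeeze_zero (fun k => norm_nonneg _) (fun k => ?_) h2
        cases k with
        | zero =>
          have hC : 0 ≤ C := le_trans (norm_nonneg _) (hw 0)
          simpa using mul_nonneg (norm_nonneg (x 0)) hC
        | succ j =>
          show ‖w j * x j‖ ≤ ‖x (j+1-1)‖ * C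
          simp only [Nat.add_sub_cancel, norm_mul]
          rw [mul_comm]
          exact mul_le_mul_of_nonneg_left (hw j) (norm_nonneg _)),
      map_add' := fun x y => by
        ext k; cases k <;> simp [mkE, mul_add],
      map_smul' := fun c x => by
        ext k; cases k <;> simp [mkE] <;> ring }
    C (fun x => by
      have hC : 0 ≤ C := le_trans (norm_nonneg _) (hw 0)
      refine norm_le_of _ (by positivity) (fun k => ?_)
      cases k with
      | zero =>
        show ‖(0 : ℂ)‖ ≤ C * ‖x‖
        simpa using mul_nonneg hC (norm_nonneg x)
      | succ j =>
        show ‖w j * x j‖ ≤ C * ‖x‖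
        rw [norm_mul]
        exact mul_le_mul (hw j) (apply_le_norm x j) (norm_nonneg _) hC)

@[simp] lemma shiftOp_apply_zero (w : ℕ → ℂ) (C : ℝ) (hw) (x : E) :
    shiftOp w C hw x 0 = 0 := rfl
@[simp] lemma shiftOp_apply_succ (w : ℕ → ℂ) (C : ℝ) (hw) (x : E) (k : ℕ) :
    shiftOp w C hw x (k+1) = w k * x k := rfl

section
variable (w : ℕ → ℂ) (C : ℝ) (hw : ∀ k, ‖w k‖ ≤ C)

lemma shiftOp_pow (n : ℕ) :
    (∀ x : E, ∀ k, (shiftOp w C hw ^ n) x (k + n) = (∏ j ∈ range n, w (k + j)) * x k) ∧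
    (∀ x : E, ∀ k, k < n → (shiftOp w C hw ^ n) x k = 0) := by
  induction n with
  | zero => exact ⟨fun x k => by simp, fun x k hk => by omega⟩
  | succ n ih =>
    have hpow : ∀ x : E, (shiftOp w C hw ^ (n+1)) x = (shiftOp w C hw ^ n) (shiftOp w C hw x) := by
      intro x; rw [pow_succ]; rfl
    constructor
    · intro x k
      rw [hpow]
      have h1 : k + (n + 1) = (k + 1) + n := by omega
      rw [h1, ih.1 (shiftOp w C hw x) (k+1)]
      rw [shiftOp_apply_succ]
      rw [Finset.prod_range_succ']
      have h2 : ∀ j, k + 1 + j = k + (j + 1) := fun j => by omega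
      rw [Finset.prod_congr rfl (fun j _ => by rw [h2 j])]
      simp [mul_assoc, mul_comm, mul_left_comm]
    · intro x k hk
      rw [hpow]
      rcases Nat.lt_or_ge k n with h | h
      · exact ih.2 _ k h
      · have hkn : k = 0 + n := by omega
        rw [hkn, ih.1 (shiftOp w C hw x) 0]
        simp
end

lemma shiftOp_pow_norm_le (w : ℕ → ℂ) (C : ℝ) (hw : ∀ k, ‖w k‖ ≤ C) (n : ℕ) (t : ℝ)
    (ht : 0 ≤ t) (h : ∀ k, (∏ j ∈ range n, ‖w (k + j)‖) ≤ t) :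
    ‖shiftOp w C hw ^ n‖ ≤ t := by
  refine ContinuousLinearMap.opNorm_le_bound _ ht (fun x => ?_)
  refine norm_le_of _ (mul_nonneg ht (norm_nonneg x)) (fun m => ?_)
  rcases Nat.lt_or_ge m n with hm | hm
  · rw [(shiftOp_pow w C hw n).2 x m hm]
    simpa using mul_nonneg ht (norm_nonneg x)
  · have hm' : m = (m - n) + n := by omega
    rw [hm', (shiftOp_pow w C hw n).1 x (m - n)]
    rw [norm_mul]
    calc ‖∏ j ∈ range n, w (m - n + j)‖ * ‖x (m-n)‖
        ≤ t * ‖x (m-n)‖ := by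
          refine mul_le_mul_of_nonneg_right ?_ (norm_nonneg _)
          rw [norm_prod]
          exact h (m-n)
      _ ≤ t * ‖x‖ := mul_le_mul_of_nonneg_left (apply_le_norm x _) ht

lemma isUnit_of_commute_isUnit {M : Type*} [Monoid M] {a b : M}
    (hc : a * b = b * a) (h : IsUnit (a * b)) : IsUnit a := by
  obtain ⟨u, hu⟩ := h
  have hcu : Commute a ↑u := by
    change a * ↑u = ↑u * a
    rw [hu, hc, ← mul_assoc, hc]
  have hinv : Commute a ↑u⁻¹ := hcu.units_inv_right
  refine ⟨⟨a, b * ↑u⁻¹, ?_, ?_⟩, rfl⟩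
  · rw [← mul_assoc, ← hu]; exact u.mul_inv
  · show b * ↑u⁻¹ * a = 1
    rw [mul_assoc, ← hinv.eq, ← mul_assoc, ← hc, ← hu]; exact u.mul_inv

lemma geom_aux {R : Type*} [Ring R] (a : R) (n : ℕ) :
    (1 - a) * (∑ i ∈ range n, a ^ i) = 1 - a ^ n := by
  have h2 : (∑ i ∈ range n, a ^ i) * (1 - a) = 1 - a ^ n := by
    have := geom_sum_mul a n
    have : (∑ i ∈ range n, a ^ i) * (1 - a) = -((∑ i ∈ range n, a ^ i) * (a - 1)) := by
      noncomm_ring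
    rw [this, geom_sum_mul, neg_sub]
  have hcomm : Commute (1 - a) (∑ i ∈ range n, a ^ i) :=
    Commute.sub_left (Commute.one_left _)
      (Commute.sum_right _ _ _ (fun i _ => (Commute.refl a).pow_right i))
  rw [hcomm.eq, h2]

lemma one_sub_unit_of_pow {R : Type*} [NormedRing R] [CompleteSpace R] (a : R) (n : ℕ)
    (h : ‖a ^ n‖ < 1) : IsUnit (1 - a) := by
  have hu : IsUnit ((1 - a) * (∑ i ∈ range n, a ^ i)) := by
    rw [geom_aux]
    exact (Units.oneSub (a ^ n) h).isUnit
  have hcomm : Commute (1 - a) (∑ i ∈ range n, a ^ i) :=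
    Commute.sub_left (Commute.one_left _)
      (Commute.sum_right _ _ _ (fun i _ => (Commute.refl a).pow_right i))
  exact isUnit_of_commute_isUnit hcomm.eq hu

lemma prod_period {M : Type*} [CommMonoid M] {p : ℕ} [NeZero p] (g : Fin p → M) (k : ℕ) :
    ∏ j ∈ range p, g ↑(k + j) = ∏ i, g i := by
  have h1 : ∀ j : ℕ, (↑(k + j) : Fin p) = ↑k + ↑j := fun j => Nat.cast_add k j
  simp_rw [h1]
  rw [← Fin.prod_univ_eq_prod_range (fun j : ℕ => g (↑k + ↑j)) p]
  simp_rw [Fin.cast_val_eq_self]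
  exact Equiv.prod_comp (Equiv.addLeft (↑k : Fin p)) g

lemma prod_block {M : Type*} [CommMonoid M] {p : ℕ} [NeZero p] (g : Fin p → M) (m k : ℕ) :
    ∏ j ∈ range (m * p), g ↑(k + j) = (∏ i, g i) ^ m := by
  induction m with
  | zero => simp
  | succ n ih =>
    have : (n + 1) * p = n * p + p := by ring
    rw [this, Finset.prod_range_add, ih, pow_succ]
    congr 1
    have h2 : ∀ j, k + (n * p + j) = (k + n * p) + j := fun j => by omega
    simp_rw [h2]
    exact prod_period g (k + n * p)

-- generic block for ℕ-periodic real sequences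
lemma prod_block' {h : ℕ → ℝ} {L : ℕ} {τ : ℝ}
    (hper : ∀ k, ∏ j ∈ range L, h (k + j) = τ) (n k : ℕ) :
    ∏ j ∈ range (n * L), h (k + j) = τ ^ n := by
  induction n with
  | zero => simp
  | succ n ih =>
    have : (n + 1) * L = n * L + L := by ring
    rw [this, Finset.prod_range_add, ih, pow_succ]
    congr 1
    have h2 : ∀ j, k + (n * L + j) = (k + n * L) + j := fun j => by omega
    simp_rw [h2]
    exact hper (k + n * L)

lemma prod_le_bound {h : ℕ → ℝ} {L : ℕ} (hL : 0 < L) {τ Mb : ℝ} (hτ : 0 ≤ τ)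
    (hM : ∀ j, 0 ≤ h j ∧ h j ≤ Mb)
    (hper : ∀ k, ∏ j ∈ range L, h (k + j) = τ) (k : ℕ) :
    ∏ j ∈ range k, h j ≤ (1 + Mb) ^ L * τ ^ (k / L) := by
  have hMb : 0 ≤ Mb := le_trans (hM 0).1 (hM 0).2
  have hk : k = (k / L) * L + k % L := by
    rw [mul_comm]; exact (Nat.div_add_mod k L).symm
  calc ∏ j ∈ range k, h j
      = (∏ j ∈ range ((k / L) * L), h j) * ∏ j ∈ range (k % L), h ((k / L) * L + j) := by
        rw [← Finset.prod_range_add, ← hk]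
    _ ≤ τ ^ (k / L) * Mb ^ (k % L) := by
        have e1 : ∏ j ∈ range ((k / L) * L), h j = τ ^ (k / L) := by
          have := prod_block' hper (k / L) 0
          simpa using this
        rw [e1]
        refine mul_le_mul_of_nonneg_left ?_ (pow_nonneg hτ _)
        calc ∏ j ∈ range (k % L), h ((k / L) * L + j)
            ≤ ∏ _j ∈ range (k % L), Mb :=
              Finset.prod_le_prod (fun j _ => (hM _).1) (fun j _ => (hM _).2)
          _ = Mb ^ (k % L) := by rw [Finset.prod_const, Finset.card_range]
    _ ≤ τ ^ (k / L) * (1 + Mb) ^ L := by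
        refine mul_le_mul_of_nonneg_left ?_ (pow_nonneg hτ _)
        calc Mb ^ (k % L) ≤ (1 + Mb) ^ (k % L) :=
              pow_le_pow_left₀ hMb (by linarith) _
          _ ≤ (1 + Mb) ^ L :=
              pow_le_pow_right₀ (by linarith) (le_of_lt (Nat.mod_lt _ hL))
    _ = (1 + Mb) ^ L * τ ^ (k / L) := mul_comm _ _

lemma summable_of_div_bound {f : ℕ → ℝ} (hf0 : ∀ k, 0 ≤ f k) {K τ : ℝ} {L : ℕ}
    (hL : 0 < L) (hτ0 : 0 ≤ τ) (hτ1 : τ < 1) (hK : 0 ≤ K)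
    (hb : ∀ k, f k ≤ K * τ ^ (k / L)) : Summable f := by
  set u : ℝ := (τ + 1) / 2 with hu
  have hu0 : 0 < u := by rw [hu]; linarith
  have hu1 : u < 1 := by rw [hu]; linarith
  have hτu : τ ≤ u := by rw [hu]; linarith
  set q : ℝ := u ^ ((1 : ℝ) / L) with hq
  have hq0 : 0 ≤ q := Real.rpow_nonneg hu0.le _
  have hq1 : q < 1 := Real.rpow_lt_one hu0.le hu1 (by positivity)
  have key : ∀ k : ℕ, f k ≤ (K / u) * q ^ k := by
    intro k
    have h1 : f k ≤ K * u ^ (k / L) :=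
      (hb k).trans (mul_le_mul_of_nonneg_left (pow_le_pow_left₀ hτ0 hτu _) hK)
    have h2 : (u : ℝ) ^ (k / L) ≤ u⁻¹ * q ^ k := by
      have e0 : (u : ℝ) ^ (k / L) = u ^ ((k / L : ℕ) : ℝ) := (Real.rpow_natCast u _).symm
      have hexp : (k : ℝ) / L - 1 ≤ ((k / L : ℕ) : ℝ) := by
        have h3 : k < L * (k / L) + L := Nat.lt_mul_div_succ k hL |>.trans_le (by ring_nf; omega)
        have h4 : (k : ℝ) < L * ((k / L : ℕ) : ℝ) + L := by exact_mod_cast h3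
        have hL' : (0 : ℝ) < L := by exact_mod_cast hL
        rw [div_sub_one hL'.ne', div_le_iff₀ hL']
        nlinarith
      calc (u : ℝ) ^ (k / L) = u ^ ((k / L : ℕ) : ℝ) := e0
        _ ≤ u ^ ((k : ℝ) / L - 1) := Real.rpow_le_rpow_of_exponent_ge hu0 hu1.le hexp
        _ = u⁻¹ * q ^ k := by
            rw [Real.rpow_sub hu0, Real.rpow_one, div_eq_mul_inv, mul_comm]
            congr 1
            rw [hq, ← Real.rpow_natCast (u ^ ((1:ℝ)/L)) k, ← Real.rpow_mul hu0.le]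
            congr 1
            ring
    calc f k ≤ K * u ^ (k / L) := h1
      _ ≤ K * (u⁻¹ * q ^ k) := mul_le_mul_of_nonneg_left h2 hK
      _ = (K / u) * q ^ k := by rw [div_eq_mul_inv, mul_assoc]
  exact Summable.of_nonneg_of_le hf0 key ((summable_geometric_of_lt_one hq0 hq1).mul_left _)

lemma summable_mul (y : ℕ → ℂ) (hy : Summable (fun k => ‖y k‖)) (x : E) : Summable (fun k => y k * x k) := by
  refine Summable.of_norm ?_
  refine Summable.of_nonneg_of_le (fun k => norm_nonneg _) (fun k => ?_) (hy.mul_right ‖x‖)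
  rw [norm_mul]
  exact mul_le_mul_of_nonneg_left (apply_le_norm x k) (norm_nonneg _)

def phiFun (y : ℕ → ℂ) (hy : Summable (fun k => ‖y k‖)) : E →L[ℂ] ℂ :=
  LinearMap.mkContinuous
    { toFun := fun x => ∑' k, y k * x k,
      map_add' := fun x y' => by
        simp_rw [ZeroAtInftyContinuousMap.coe_add, Pi.add_apply, mul_add]
        exact Summable.tsum_add (summable_mul y hy x) (summable_mul y hy y'),
      map_smul' := fun c x => by
        simp_rw [ZeroAtInftyContinuousMap.coe_smul, Pi.smul_apply, smul_eq_mul,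
          mul_left_comm, RingHom.id_apply]
        exact tsum_mul_left }
    (∑' k, ‖y k‖) (fun x => by
      simp only [LinearMap.coe_mk, AddHom.coe_mk]
      calc ‖∑' k, y k * x k‖ ≤ ∑' k, ‖y k * x k‖ :=
            norm_tsum_le_tsum_norm ((summable_mul y hy x).norm)
        _ ≤ ∑' k, ‖y k‖ * ‖x‖ := by
            refine Summable.tsum_le_tsum (fun k => ?_) ((summable_mul y hy x).norm) (hy.mul_right _)
            rw [norm_mul]
            exact mul_le_mul_of_nonneg_left (apply_le_norm x k) (norm_nonneg _)
        _ = (∑' k, ‖y k‖) * ‖x‖ := tsum_mul_right)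

lemma phiFun_apply (y : ℕ → ℂ) (hy : Summable (fun k => ‖y k‖)) (x : E) : phiFun y hy x = ∑' k, y k * x k := rfl

section Main
variable {l l' : ℕ} [NeZero l] [NeZero l'] {r : Fin l → ℂ} {s : Fin l' → ℂ}

lemma dir1 (hs : ∀ j, s j ≠ 0)
    (B : E →L[ℂ] E)
    (hB0 : ∀ x : E, B x 0 = r 0 * x 0)
    (hB : ∀ (x : E) (k : ℕ), B x (k + 1) = s (↑k) * x k + r (↑(k + 1)) * x (k + 1))
    (lam : ℂ)
    (hlt : (∏ j, ‖s j‖) ^ l < (∏ i, ‖lam - r i‖) ^ l') :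
    lam ∉ spectrum ℂ B := by
  set A : ℝ := ∏ i, ‖lam - r i‖ with hA
  set Bq : ℝ := ∏ j, ‖s j‖ with hBq
  have hBq0 : 0 < Bq := Finset.prod_pos (fun j _ => norm_pos_iff.2 (hs j))
  have hA0 : 0 < A ^ l' := lt_of_le_of_lt (pow_nonneg (by positivity) _) hlt
  have hApos : 0 < A := by
    by_contra h
    push_neg at h
    have : A = 0 := le_antisymm h (Finset.prod_nonneg (fun i _ => norm_nonneg _))
    rw [this] at hA0
    simp [zero_pow (NeZero.ne l')] at hA0
  have hne : ∀ i : Fin l, lam - r i ≠ 0 := by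
    intro i h
    have : A = 0 := Finset.prod_eq_zero (Finset.mem_univ i) (by rw [h, norm_zero])
    rw [this] at hApos; exact lt_irrefl 0 hApos
  set L : ℕ := l * l' with hL
  have hLpos : 0 < L := Nat.mul_pos (Nat.pos_of_ne_zero (NeZero.ne l)) (Nat.pos_of_ne_zero (NeZero.ne l'))
  -- diagonal operator
  set d : ℕ → ℂ := fun k => lam - r ↑k with hd
  have hCd : ∀ k, ‖d k‖ ≤ ‖lam‖ + ∑ i, ‖r i‖ := by
    intro k
    refine (norm_sub_le _ _).trans ?_
    gcongr
    exact Finset.single_le_sum (fun i _ => norm_nonneg (r i)) (Finset.mem_univ _)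
  have hCd' : ∀ k, ‖(d k)⁻¹‖ ≤ ∑ i, ‖(lam - r i)⁻¹‖ :=
    fun k => Finset.single_le_sum (fun i _ => norm_nonneg ((lam - r i)⁻¹)) (Finset.mem_univ (↑k : Fin l))
  set D : E →L[ℂ] E := mulOp d _ hCd with hD
  set D' : E →L[ℂ] E := mulOp (fun k => (d k)⁻¹) _ hCd' with hD'
  have hDunit : IsUnit D := by
    refine ⟨⟨D, D', ?_, ?_⟩, rfl⟩
    · refine ContinuousLinearMap.ext (fun x => ZeroAtInftyContinuousMap.ext (fun k => ?_))
      show d k * ((d k)⁻¹ * x k) = x k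
      rw [← mul_assoc, mul_inv_cancel₀ (hne ↑k), one_mul]
    · refine ContinuousLinearMap.ext (fun x => ZeroAtInftyContinuousMap.ext (fun k => ?_))
      show (d k)⁻¹ * (d k * x k) = x k
      rw [← mul_assoc, inv_mul_cancel₀ (hne ↑k), one_mul]
  -- weighted shift
  set w : ℕ → ℂ := fun k => s ↑k / d (k + 1) with hw
  have hCw : ∀ k, ‖w k‖ ≤ (∑ j, ‖s j‖) * (∑ i, ‖(lam - r i)⁻¹‖) := by
    intro k
    rw [hw]
    simp only [div_eq_mul_inv, norm_mul]
    refine mul_le_mul ?_ (hCd' _) (norm_nonneg _) ?_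
    · exact Finset.single_le_sum (fun j _ => norm_nonneg (s j)) (Finset.mem_univ _)
    · exact Finset.sum_nonneg (fun i _ => norm_nonneg _)
  set W : E →L[ℂ] E := shiftOp w _ hCw with hWdef
  set τ : ℝ := Bq ^ l / A ^ l' with hτ
  have hτ0 : 0 ≤ τ := div_nonneg (by positivity) (le_of_lt hA0)
  have hτ1 : τ < 1 := (div_lt_one hA0).2 hlt
  have hper : ∀ k, (∏ j ∈ range L, ‖w (k + j)‖) = τ := by
    intro k
    have e1 : ∀ j, ‖w j‖ = ‖s (↑j : Fin l')‖ * ‖lam - r (↑(j+1) : Fin l)‖⁻¹ := by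
      intro j
      rw [hw]
      simp only [div_eq_mul_inv, norm_mul, norm_inv]
      rfl
    simp_rw [e1]
    rw [Finset.prod_mul_distrib]
    have e2 : (∏ j ∈ range L, ‖s (↑(k + j) : Fin l')‖) = Bq ^ l := by
      have := prod_block (fun i : Fin l' => ‖s i‖) l k
      rwa [← hL] at this
    have e3 : (∏ j ∈ range L, ‖lam - r (↑(k + j + 1) : Fin l)‖⁻¹) = (A ^ l')⁻¹ := by
      have h4 : ∀ j, k + j + 1 = (k + 1) + j := fun j => by omega
      simp_rw [h4]
      rw [Finset.prod_inv_distrib]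
      congr 1
      have := prod_block (fun i : Fin l => ‖lam - r i‖) l' (k + 1)
      rw [show l' * l = L by rw [hL]; ring] at this
      rw [this]
    rw [e2, e3, hτ, div_eq_mul_inv]
  have hWL : ‖W ^ L‖ ≤ τ := by
    refine shiftOp_pow_norm_le w _ hCw L τ hτ0 (fun k => ?_)
    rw [hper k]
  have hWunit : IsUnit (1 - W) := one_sub_unit_of_pow W L (lt_of_le_of_lt hWL hτ1)
  rw [spectrum.notMem_iff]
  have heq : (algebraMap ℂ (E →L[ℂ] E) : ℂ →+* (E →L[ℂ] E)) lam - B = D * (1 - W) := by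
    refine ContinuousLinearMap.ext (fun x => ZeroAtInftyContinuousMap.ext (fun k => ?_))
    have hlhs : ((algebraMap ℂ (E →L[ℂ] E) : ℂ →+* (E →L[ℂ] E)) lam - B) x k = lam * x k - B x k := by
      rw [ContinuousLinearMap.sub_apply, Algebra.algebraMap_eq_smul_one]
      rfl
    have hrhs : (D * (1 - W)) x k = d k * (x k - W x k) := by
      show D ((1 - W) x) k = _
      have : (1 - W) x = x - W x := by
        rw [ContinuousLinearMap.sub_apply, ContinuousLinearMap.one_apply]
      rw [this]
      rfl
    rw [hlhs, hrhs]
    cases k with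
    | zero =>
      have : W x 0 = 0 := rfl
      rw [this, hB0 x, hd]
      simp only [Nat.cast_zero, sub_zero]
      ring
    | succ n =>
      have hW1 : W x (n + 1) = w n * x n := rfl
      rw [hW1, hB x n]
      have hcan : d (n+1) * (w n * x n) = s ↑n * x n := by
        show (lam - r ↑(n+1)) * ((s ↑n / (lam - r ↑(n+1))) * x n) = s ↑n * x n
        rw [← mul_assoc, mul_comm (lam - r (↑(n+1) : Fin l)), div_mul_cancel₀ _ (hne _)]
      rw [mul_sub, hcan]
      show lam * x (n+1) - (s ↑n * x n + r ↑(n+1) * x (n+1))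
        = (lam - r ↑(n+1)) * x (n+1) - s ↑n * x n
      ring
  rw [heq]
  exact hDunit.mul hWunit

set_option maxHeartbeats 2000000 in
lemma dir2 (hs : ∀ j, s j ≠ 0)
    (B : E →L[ℂ] E)
    (hB0 : ∀ x : E, B x 0 = r 0 * x 0)
    (hB : ∀ (x : E) (k : ℕ), B x (k + 1) = s (↑k) * x k + r (↑(k + 1)) * x (k + 1))
    (lam : ℂ)
    (hlt : (∏ i, ‖lam - r i‖) ^ l' < (∏ j, ‖s j‖) ^ l) :
    lam ∈ spectrum ℂ B := by
  set A : ℝ := ∏ i, ‖lam - r i‖ with hA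
  set Bq : ℝ := ∏ j, ‖s j‖ with hBq
  have hBq0 : 0 < Bq := Finset.prod_pos (fun j _ => norm_pos_iff.2 (hs j))
  have hBql : 0 < Bq ^ l := by positivity
  set L : ℕ := l * l' with hL
  have hLpos : 0 < L :=
    Nat.mul_pos (Nat.pos_of_ne_zero (NeZero.ne l)) (Nat.pos_of_ne_zero (NeZero.ne l'))
  set τ : ℝ := A ^ l' / Bq ^ l with hτ
  have hτ0 : 0 ≤ τ := div_nonneg (by positivity) hBql.le
  have hτ1 : τ < 1 := (div_lt_one hBql).2 hlt
  -- the eigen-sequence of the adjoint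
  set z : ℕ → ℂ := fun j => (lam - r ↑j) / s ↑j with hz
  set y : ℕ → ℂ := fun k => ∏ j ∈ range k, z j with hy
  have hy0 : y 0 = 1 := by simp [hy]
  have hysucc : ∀ k, y (k + 1) = y k * z k := fun k => Finset.prod_range_succ z k
  have hrec : ∀ k, y k * (lam - r ↑k) = y (k + 1) * s ↑k := by
    intro k
    rw [hysucc k, hz]
    show y k * (lam - r ↑k) = y k * ((lam - r ↑k) / s ↑k) * s ↑k
    rw [mul_assoc, div_mul_cancel₀ _ (hs ↑k)]
  set Mb : ℝ := (∑ i, ‖lam - r i‖) * (∑ j, ‖(s j)⁻¹‖) with hMb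
  have hMb0 : 0 ≤ Mb :=
    mul_nonneg (Finset.sum_nonneg fun i _ => norm_nonneg _)
      (Finset.sum_nonneg fun j _ => norm_nonneg _)
  have hzM : ∀ j : ℕ, 0 ≤ ‖z j‖ ∧ ‖z j‖ ≤ Mb := by
    intro j
    refine ⟨norm_nonneg _, ?_⟩
    rw [hz]
    show ‖(lam - r ↑j) / s ↑j‖ ≤ Mb
    rw [div_eq_mul_inv, norm_mul, norm_inv, ← norm_inv]
    exact mul_le_mul
      (Finset.single_le_sum (fun i _ => norm_nonneg (lam - r i)) (Finset.mem_univ _))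
      (Finset.single_le_sum (fun j' _ => norm_nonneg ((s j')⁻¹)) (Finset.mem_univ _))
      (norm_nonneg _)
      (Finset.sum_nonneg fun i _ => norm_nonneg _)
  have hper : ∀ k, (∏ j ∈ range L, ‖z (k + j)‖) = τ := by
    intro k
    have e1 : ∀ j : ℕ, ‖z j‖ = ‖lam - r (↑j : Fin l)‖ * ‖s (↑j : Fin l')‖⁻¹ := by
      intro j
      rw [hz]
      show ‖(lam - r ↑j) / s ↑j‖ = _
      rw [div_eq_mul_inv, norm_mul, norm_inv]
    simp_rw [e1]
    rw [Finset.prod_mul_distrib]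
    have e2 : (∏ j ∈ range L, ‖lam - r (↑(k + j) : Fin l)‖) = A ^ l' := by
      have := prod_block (fun i : Fin l => ‖lam - r i‖) l' k
      rw [show l' * l = L by rw [hL]; ring] at this
      rw [this]
    have e3 : (∏ j ∈ range L, ‖s (↑(k + j) : Fin l')‖⁻¹) = (Bq ^ l)⁻¹ := by
      rw [Finset.prod_inv_distrib]
      congr 1
      have := prod_block (fun i : Fin l' => ‖s i‖) l k
      rwa [← hL] at this
    rw [e2, e3, hτ, div_eq_mul_inv]
  have hynorm : ∀ k, ‖y k‖ = ∏ j ∈ range k, ‖z j‖ := by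
    intro k
    rw [hy]
    exact norm_prod _ _
  have hybound : ∀ k, ‖y k‖ ≤ (1 + Mb) ^ L * τ ^ (k / L) := by
    intro k
    rw [hynorm k]
    exact prod_le_bound hLpos hτ0 hzM hper k
  have hysum : Summable (fun k => ‖y k‖) :=
    summable_of_div_bound (fun k => norm_nonneg _) hLpos hτ0 hτ1 (by positivity) hybound
  set φ : E →L[ℂ] ℂ := phiFun y hysum with hφ
  -- φ annihilates the range of (lam - B)
  have hkill : ∀ x : E, φ (((algebraMap ℂ (E →L[ℂ] E) : ℂ →+* (E →L[ℂ] E)) lam - B) x) = 0 := by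
    intro x
    set g : E := ((algebraMap ℂ (E →L[ℂ] E) : ℂ →+* (E →L[ℂ] E)) lam - B) x with hg
    have hgk : ∀ k, g k = lam * x k - B x k := by
      intro k
      rw [hg, ContinuousLinearMap.sub_apply, Algebra.algebraMap_eq_smul_one]
      rfl
    set a : ℕ → ℂ := fun k => y k * (lam - r ↑k) * x k with ha
    have hsumyshift : Summable (fun k => ‖y (k + 1)‖) := by
      exact (summable_nat_add_iff 1).2 hysum
    have hasum : Summable a := by
      refine Summable.of_norm ?_
      refine Summable.of_nonneg_of_le (fun k => norm_nonneg _) (fun k => ?_)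
        ((hsumyshift.mul_right ((∑ j, ‖s j‖) * ‖x‖)))
      have e4 : a k = y (k + 1) * s ↑k * x k := by rw [ha]; show y k * (lam - r ↑k) * x k = _; rw [hrec k]
      rw [e4, norm_mul, norm_mul, mul_assoc]
      refine mul_le_mul_of_nonneg_left ?_ (norm_nonneg _)
      exact mul_le_mul
        (Finset.single_le_sum (fun j _ => norm_nonneg (s j)) (Finset.mem_univ _))
        (apply_le_norm x k) (norm_nonneg _)
        (Finset.sum_nonneg fun j _ => norm_nonneg _)
    set a' : ℕ → ℂ := fun k => Nat.rec 0 (fun j _ => a j) k with ha'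
    have ha'succ : ∀ k, a' (k + 1) = a k := fun k => rfl
    have ha'0 : a' 0 = 0 := rfl
    have ha'sum : Summable a' := by
      refine (summable_nat_add_iff 1).1 ?_
      simpa only [ha'succ] using hasum
    have hterm : ∀ k, y k * g k = a k - a' k := by
      intro k
      cases k with
      | zero =>
        rw [hgk, hB0 x, ha'0, sub_zero, ha]
        show y 0 * (lam * x 0 - r 0 * x 0) = y 0 * (lam - r ↑(0:ℕ)) * x 0
        rw [Nat.cast_zero]
        ring
      | succ n =>
        rw [hgk, hB x n, ha'succ, ha]
        show y (n+1) * (lam * x (n+1) - (s ↑n * x n + r ↑(n+1) * x (n+1)))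
          = y (n+1) * (lam - r ↑(n+1)) * x (n+1) - y n * (lam - r ↑n) * x n
        rw [hrec n]
        ring
    have : φ g = ∑' k, y k * g k := phiFun_apply y hysum g
    rw [this]
    have hsplit : ∑' k, y k * g k = (∑' k, a k) - (∑' k, a' k) := by
      simp_rw [hterm]
      exact Summable.tsum_sub hasum ha'sum
    rw [hsplit]
    have : (∑' k, a' k) = ∑' k, a k := by
      rw [Summable.tsum_eq_zero_add ha'sum]
      simp only [ha'0, ha'succ, zero_add]
    rw [this, sub_self]
  -- the test vector e₀
  have he0t : Tendsto (fun k : ℕ => if k = 0 then (1:ℂ) else 0) atTop (𝓝 0) := by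
    refine Tendsto.congr' ?_ tendsto_const_nhds
    filter_upwards [eventually_ge_atTop 1] with k hk
    simp [Nat.one_le_iff_ne_zero.mp hk]
  set e0 : E := mkE (fun k => if k = 0 then (1:ℂ) else 0) he0t with he0
  have hφe0 : φ e0 = 1 := by
    have : φ e0 = ∑' k, y k * e0 k := phiFun_apply y hysum e0
    rw [this]
    have : ∑' k, y k * e0 k = y 0 * e0 0 := by
      refine tsum_eq_single 0 (fun k hk => ?_)
      have : e0 k = 0 := by
        show (if k = 0 then (1:ℂ) else 0) = 0
        simp [hk]
      rw [this, mul_zero]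
    rw [this, hy0]
    show 1 * (if (0:ℕ) = 0 then (1:ℂ) else 0) = 1
    simp
  by_contra hmem
  rw [spectrum.notMem_iff] at hmem
  obtain ⟨u, hu⟩ := hmem
  have hsurj : e0 = ((algebraMap ℂ (E →L[ℂ] E) : ℂ →+* (E →L[ℂ] E)) lam - B) ((↑u⁻¹ : E →L[ℂ] E) e0) := by
    rw [← hu]
    have : (↑u : E →L[ℂ] E) ((↑u⁻¹ : E →L[ℂ] E) e0) = ((↑u * ↑u⁻¹ : E →L[ℂ] E)) e0 := rfl
    rw [this, u.mul_inv]
    rfl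
  have : φ e0 = 0 := by rw [hsurj]; exact hkill _
  rw [hφe0] at this
  exact one_ne_zero this

lemma rpow_cond (A Bq : ℝ) (hA : 0 ≤ A) (hB : 0 ≤ Bq) {p q : ℕ} (hp : p ≠ 0) (hq : q ≠ 0) :
    A ^ ((1:ℝ)/p) ≤ Bq ^ ((1:ℝ)/q) ↔ A ^ q ≤ Bq ^ p := by
  have key : ∀ (X : ℝ), 0 ≤ X → ∀ (a b : ℕ), a ≠ 0 → (X ^ ((1:ℝ)/a)) ^ (a * b) = X ^ b := by
    intro X hX a b ha
    rw [← Real.rpow_natCast (X ^ ((1:ℝ)/a)) (a*b), ← Real.rpow_mul hX, ← Real.rpow_natCast X b]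
    congr 1
    have ha' : (a:ℝ) ≠ 0 := Nat.cast_ne_zero.2 ha
    push_cast
    field_simp
  constructor
  · intro h
    have h2 := pow_le_pow_left₀ (Real.rpow_nonneg hA _) h (p * q)
    rwa [key A hA p q hp, show p * q = q * p from Nat.mul_comm p q, key Bq hB q p hq] at h2
  · intro h
    have h2 : (A ^ ((1:ℝ)/p)) ^ (p * q) ≤ (Bq ^ ((1:ℝ)/q)) ^ (p * q) := by
      rw [key A hA p q hp, show p * q = q * p from Nat.mul_comm p q, key Bq hB q p hq]
      exact h
    exact (pow_le_pow_iff_left₀ (Real.rpow_nonneg hA _) (Real.rpow_nonneg hB _)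
      (Nat.mul_ne_zero hp hq)).1 h2

lemma mem_closure_lt {l : ℕ} [NeZero l] (r : Fin l → ℂ) (lam : ℂ) (c : ℝ) (hc : 0 < c)
    (heq : (∏ i, ‖lam - r i‖) = c) :
    lam ∈ closure {z : ℂ | (∏ i, ‖z - r i‖) < c} := by
  set P : ℂ → ℂ := fun z => ∏ i, (z - r i) with hP
  have hPnorm : ∀ z, ‖P z‖ = ∏ i, ‖z - r i‖ := fun z => norm_prod _ _
  have hPa : AnalyticAt ℂ P lam :=
    Finset.analyticAt_fun_prod Finset.univ
      (fun i _ => (analyticAt_id.sub analyticAt_const))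
  have hnotconst : ¬ (∀ᶠ z in 𝓝 lam, P z = P lam) := by
    intro hconst
    set p : Polynomial ℂ :=
      (∏ i, (Polynomial.X - Polynomial.C (r i))) - Polynomial.C (P lam) with hpdef
    have heval : ∀ z, p.eval z = P z - P lam := by
      intro z
      simp [hpdef, hP, Polynomial.eval_prod]
    have hm : (∏ i : Fin l, (Polynomial.X - Polynomial.C (r i))).Monic :=
      Polynomial.monic_prod_of_monic _ _ (fun i _ => Polynomial.monic_X_sub_C (r i))
    have hdeg : (∏ i : Fin l, (Polynomial.X - Polynomial.C (r i))).natDegree = l := by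
      rw [Polynomial.natDegree_prod _ _ (fun i _ => (Polynomial.X_sub_C_ne_zero (r i)))]
      simp [Polynomial.natDegree_X_sub_C]
    have hp0 : p ≠ 0 := by
      intro h
      have h2 : (∏ i : Fin l, (Polynomial.X - Polynomial.C (r i))) = Polynomial.C (P lam) := by
        have := sub_eq_zero.1 h
        exact this
      have h3 : l = 0 := by
        rw [← hdeg, h2, Polynomial.natDegree_C]
      exact NeZero.ne l h3
    have hfin := Polynomial.finite_setOf_isRoot hp0
    obtain ⟨ε, hε, hball⟩ := Metric.eventually_nhds_iff.1 hconst
    have hinf : {x | Polynomial.IsRoot p x}.Infinite := by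
      refine Set.infinite_of_injective_forall_mem
        (f := fun n : ℕ => lam + ((ε / (n + 2) : ℝ) : ℂ)) ?_ ?_
      · intro m n hmn
        simp only [add_right_inj] at hmn
        have hmn' : (ε / (m + 2) : ℝ) = (ε / (n + 2) : ℝ) := by exact_mod_cast hmn
        have hmn'' : ((m:ℝ) + 2)⁻¹ = ((n:ℝ) + 2)⁻¹ := by
          rw [div_eq_mul_inv, div_eq_mul_inv] at hmn'
          exact mul_left_cancel₀ hε.ne' hmn'
        have h2 : ((m:ℝ) + 2) = ((n:ℝ) + 2) := inv_injective hmn''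
        have : (m : ℝ) = n := by linarith
        exact_mod_cast this
      · intro n
        have hpos : (0:ℝ) < ε / (n + 2) := by positivity
        have hdist : dist (lam + ((ε / (n + 2) : ℝ) : ℂ)) lam < ε := by
          rw [dist_eq_norm]
          simp only [add_sub_cancel_left]
          rw [Complex.norm_real, Real.norm_eq_abs, abs_of_pos hpos]
          rw [div_lt_iff₀ (by positivity)]
          nlinarith
        have := hball hdist
        show Polynomial.IsRoot p _
        rw [Polynomial.IsRoot, heval, this, sub_self]
    exact hfin.not_infinite hinf
  have hmap : 𝓝 (P lam) ≤ Filter.map P (𝓝 lam) :=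
    hPa.eventually_constant_or_nhds_le_map_nhds.resolve_left hnotconst
  rw [mem_closure_iff_nhds]
  intro N hN
  have hPN : P '' N ∈ 𝓝 (P lam) := hmap (Filter.image_mem_map hN)
  obtain ⟨ε, hε, hball⟩ := Metric.mem_nhds_iff.1 hPN
  have hPlam : ‖P lam‖ = c := by rw [hPnorm]; exact heq
  set δ : ℝ := min (ε / (2 * c)) (1/2) with hδ
  have hδ0 : 0 < δ := lt_min (by positivity) (by norm_num)
  have hδ1 : δ < 1 := lt_of_le_of_lt (min_le_right _ _) (by norm_num)
  set wpt : ℂ := (1 - (δ:ℂ)) * P lam with hwpt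
  have hwball : wpt ∈ Metric.ball (P lam) ε := by
    rw [Metric.mem_ball, dist_eq_norm, hwpt]
    have : (1 - (δ:ℂ)) * P lam - P lam = -(δ:ℂ) * P lam := by ring
    rw [this, norm_mul, norm_neg, Complex.norm_real, Real.norm_eq_abs, abs_of_pos hδ0, hPlam]
    calc δ * c ≤ (ε / (2 * c)) * c := by
          refine mul_le_mul_of_nonneg_right (min_le_left _ _) hc.le
      _ = ε / 2 := by field_simp
      _ < ε := by linarith
  obtain ⟨z, hzN, hzw⟩ := hball hwball
  refine ⟨z, hzN, ?_⟩
  show (∏ i, ‖z - r i‖) < c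
  rw [← hPnorm, hzw, hwpt, norm_mul, hPlam]
  have : ‖(1 : ℂ) - (δ:ℂ)‖ = 1 - δ := by
    rw [show (1:ℂ) - (δ:ℂ) = ((1 - δ : ℝ) : ℂ) by push_cast; ring,
      Complex.norm_real, Real.norm_eq_abs, abs_of_pos (by linarith)]
  rw [this]
  nlinarith

end Main

end SpectrumAux3
end SpectrumAux

open SpectrumAux3 in
/-- The spectrum of `B` on `c₀` equals
`S = {λ : (|λ-r₁|⋯|λ-r_l|)^{1/l} ≤ (|s₁|⋯|s_{l'}|)^{1/l'}}`. -/
theorem stmt_3 (l l' : ℕ) [NeZero l] [NeZero l'] (r : Fin l → ℂ) (s : Fin l' → ℂ)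
    (hs : ∀ j, s j ≠ 0)
    (B : ZeroAtInftyContinuousMap ℕ ℂ →L[ℂ] ZeroAtInftyContinuousMap ℕ ℂ)
    (hB0 : ∀ x : ZeroAtInftyContinuousMap ℕ ℂ, B x 0 = r 0 * x 0)
    (hB : ∀ (x : ZeroAtInftyContinuousMap ℕ ℂ) (k : ℕ),
      B x (k + 1) = s (↑k) * x k + r (↑(k + 1)) * x (k + 1)) :
    spectrum ℂ B = {lam : ℂ | (∏ i, ‖lam - r i‖) ^ ((1 : ℝ) / l) ≤
      (∏ j, ‖s j‖) ^ ((1 : ℝ) / l')} := by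
  have hl : l ≠ 0 := NeZero.ne l
  have hl' : l' ≠ 0 := NeZero.ne l'
  ext lam
  simp only [Set.mem_setOf_eq]
  have hAnn : (0:ℝ) ≤ ∏ i, ‖lam - r i‖ := Finset.prod_nonneg (fun i _ => norm_nonneg _)
  have hBnn : (0:ℝ) ≤ ∏ j, ‖s j‖ := Finset.prod_nonneg (fun j _ => norm_nonneg _)
  rw [rpow_cond _ _ hAnn hBnn hl hl']
  constructor
  · intro hspec
    by_contra hgt
    push_neg at hgt
    exact (dir1 hs B hB0 hB lam hgt) hspec
  · intro hle
    rcases lt_or_eq_of_le hle with hlt | heq2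
    · exact dir2 hs B hB0 hB lam hlt
    · have hBq0 : (0:ℝ) < ∏ j, ‖s j‖ :=
        Finset.prod_pos (fun j _ => norm_pos_iff.2 (hs j))
      have hc : (0:ℝ) < ∏ i, ‖lam - r i‖ := by
        rcases lt_or_eq_of_le hAnn with h | h
        · exact h
        · exfalso
          have : ((0:ℝ)) ^ l' = (∏ j, ‖s j‖) ^ l := by rw [h, heq2]
          rw [zero_pow hl'] at this
          have := pow_pos hBq0 l
          rw [← ‹(0:ℝ) = _ ^ l›] at this
          exact lt_irrefl 0 this
      have hsub : {z : ℂ | (∏ i, ‖z - r i‖) < ∏ i, ‖lam - r i‖} ⊆ spectrum ℂ B := by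
        intro z hz
        refine dir2 hs B hB0 hB z ?_
        calc (∏ i, ‖z - r i‖) ^ l'
            < (∏ i, ‖lam - r i‖) ^ l' :=
              pow_lt_pow_left₀ hz (Finset.prod_nonneg (fun i _ => norm_nonneg _)) hl'
          _ = (∏ j, ‖s j‖) ^ l := heq2
      have hclos : lam ∈ closure {z : ℂ | (∏ i, ‖z - r i‖) < ∏ i, ‖lam - r i‖} :=
        mem_closure_lt r lam _ hc rfl
      have := closure_mono hsub hclos
      rwa [(spectrum.isClosed (𝕜 := ℂ) B).closure_eq] at this
end

section
/- The point spectrum of B on c₀ is empty: no complex number λ admits a nonzero sequence x ∈ c₀ with Bx = λx. -/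
open Filter Topology

open Fin.NatCast in
/-- The point spectrum of `B` on `c₀` is empty: no `λ ∈ ℂ` admits a nonzero
`x ∈ c₀` with `Bx = λx`. -/
theorem stmt_4 (l l' : ℕ) [NeZero l] [NeZero l'] (r : Fin l → ℂ) (s : Fin l' → ℂ)
    (hs : ∀ j, s j ≠ 0)
    (B : ZeroAtInftyContinuousMap ℕ ℂ →L[ℂ] ZeroAtInftyContinuousMap ℕ ℂ)
    (hB0 : ∀ x : ZeroAtInftyContinuousMap ℕ ℂ, B x 0 = r 0 * x 0)
    (hB : ∀ (x : ZeroAtInftyContinuousMap ℕ ℂ) (k : ℕ),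
      B x (k + 1) = s (↑k) * x k + r (↑(k + 1)) * x (k + 1)) :
    ¬ ∃ (lam : ℂ) (x : ZeroAtInftyContinuousMap ℕ ℂ), x ≠ 0 ∧ B x = lam • x := by
  classical
  rintro ⟨lam, x, hx, hBx⟩
  have hx' : ∃ k, x k ≠ 0 := by
    by_contra h
    push_neg at h
    exact hx (by ext k; simpa using h k)
  set m := Nat.find hx' with hm
  have hxm : x m ≠ 0 := Nat.find_spec hx'
  have hmin : ∀ k, k < m → x k = 0 := by
    intro k hk
    have := Nat.find_min hx' (show k < Nat.find hx' from hm ▸ hk)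
    exact not_not.mp this
  have hsmul : ∀ k : ℕ, B x k = lam * x k := by
    intro k; rw [hBx]; simp
  -- lam = r m
  have hlam : lam = r (m : Fin l) := by
    rcases Nat.eq_zero_or_pos m with h0 | hpos
    · have h1 := hB0 x
      rw [hsmul 0] at h1
      rw [h0] at hxm ⊢
      have : (lam - r ((0 : ℕ) : Fin l)) * x 0 = 0 := by
        push_cast
        linear_combination h1
      rcases mul_eq_zero.mp this with h | h
      · exact sub_eq_zero.mp h
      · exact absurd h hxm
    · obtain ⟨k, hk1⟩ : ∃ k, m = k + 1 := ⟨m - 1, by omega⟩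
      have h1 := hB x k
      rw [hsmul (k + 1), hmin k (by omega)] at h1
      rw [hk1] at hxm ⊢
      have : (lam - r ((k + 1 : ℕ) : Fin l)) * x (k + 1) = 0 := by
        linear_combination h1
      rcases mul_eq_zero.mp this with h | h
      · exact sub_eq_zero.mp h
      · exact absurd h hxm
  -- forward propagation
  have hfw : ∀ n : ℕ, x (m + n) ≠ 0 := by
    intro n
    induction n with
    | zero => simpa using hxm
    | succ n ih =>
      intro h0
      have h1 := hB x (m + n)
      rw [hsmul (m + n + 1)] at h1
      have hmn1 : m + (n + 1) = m + n + 1 := by ring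
      rw [hmn1] at h0
      rw [h0] at h1
      have : s ((m + n : ℕ) : Fin l') * x (m + n) = 0 := by linear_combination -h1
      rcases mul_eq_zero.mp this with h | h
      · exact hs _ h
      · exact ih h
  -- final contradiction at k = m + l - 1
  have hl : 1 ≤ l := Nat.one_le_iff_ne_zero.mpr (NeZero.ne l)
  have hk : m + (l - 1) + 1 = m + l := by omega
  have h1 := hB x (m + (l - 1))
  rw [hsmul (m + (l - 1) + 1), hk] at h1
  have hcast : ((m + l : ℕ) : Fin l) = (m : Fin l) := by
    push_cast
    simp
  rw [hcast, hlam] at h1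
  have : s ((m + (l - 1) : ℕ) : Fin l') * x (m + (l - 1)) = 0 := by linear_combination -h1
  rcases mul_eq_zero.mp this with h | h
  · exact hs _ h
  · exact hfw (l - 1) h
end

section
/- The point spectrum of the adjoint B* acting on ℓ¹ (identified with the dual of c₀) equals {λ ∈ ℂ : (|λ - r₁|⋯|λ - r_l|)^{1/l} < (|s₁|⋯|s_{l'}|)^{1/l'}}. That is, λ is an eigenvalue of the transposed matrix B^T acting on ℓ¹ if and only if this strict inequality holds. -/
open Filter Topology
open Fin.NatCast

private lemma aux_prod_shift {l : ℕ} [NeZero l] (H : Fin l → ℝ) (k : ℕ) :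
    ∏ j ∈ Finset.range l, H ((k + j : ℕ) : Fin l) = ∏ i, H i := by
  calc ∏ j ∈ Finset.range l, H ((k + j : ℕ) : Fin l)
      = ∏ j ∈ Finset.range l, H ((k : Fin l) + (j : Fin l)) := by
        exact Finset.prod_congr rfl fun j _ => by push_cast; ring_nf
    _ = ∏ i : Fin l, H ((k : Fin l) + ((i : ℕ) : Fin l)) :=
        (Fin.prod_univ_eq_prod_range (fun j => H ((k : Fin l) + (j : Fin l))) l).symm
    _ = ∏ i : Fin l, H ((k : Fin l) + i) := by simp [Fin.cast_val_eq_self]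
    _ = ∏ i, H i := Equiv.prod_comp (Equiv.addLeft (k : Fin l)) H

private lemma aux_prod_blocks {l : ℕ} [NeZero l] (H : Fin l → ℝ) (k c : ℕ) :
    ∏ j ∈ Finset.range (c * l), H ((k + j : ℕ) : Fin l) = (∏ i, H i) ^ c := by
  induction c with
  | zero => simp
  | succ c ih =>
      rw [Nat.succ_mul, Finset.prod_range_add, ih, pow_succ]
      congr 1
      rw [← aux_prod_shift H (k + c * l)]
      exact Finset.prod_congr rfl fun j _ => by rw [Nat.add_assoc]

private lemma aux_block {l l' : ℕ} [NeZero l] [NeZero l'] (r : Fin l → ℂ) (s : Fin l' → ℂ)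
    (lam : ℂ) (x : ℕ → ℂ)
    (hrec : ∀ k : ℕ, r (↑k) * x k + s (↑k) * x (k + 1) = lam * x k) (k : ℕ) :
    (∏ j, ‖s j‖) ^ l * ‖x (k + l * l')‖
      = (∏ i, ‖lam - r i‖) ^ l' * ‖x k‖ := by
  have hnstep : ∀ k : ℕ, ‖s (k : Fin l')‖ * ‖x (k + 1)‖
      = ‖lam - r (k : Fin l)‖ * ‖x k‖ := by
    intro k
    rw [← norm_mul, ← norm_mul]
    congr 1
    linear_combination hrec k
  have hblock : ∀ c : ℕ,
      (∏ j ∈ Finset.range c, ‖s ((k + j : ℕ) : Fin l')‖) * ‖x (k + c)‖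
      = (∏ j ∈ Finset.range c, ‖lam - r ((k + j : ℕ) : Fin l)‖)
          * ‖x k‖ := by
    intro c
    induction c with
    | zero => simp
    | succ c ih =>
        rw [Finset.prod_range_succ, Finset.prod_range_succ]
        simp only [Nat.add_succ]
        linear_combination
          (∏ j ∈ Finset.range c, ‖s ((k + j : ℕ) : Fin l')‖) * hnstep (k + c)
          + ‖lam - r ((k + c : ℕ) : Fin l)‖ * ih
  have h := hblock (l * l')
  rw [show (∏ j ∈ Finset.range (l * l'), ‖s ((k + j : ℕ) : Fin l')‖)
        = (∏ j, ‖s j‖) ^ l from aux_prod_blocks (l := l') (fun j => ‖s j‖) k l,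
      show (∏ j ∈ Finset.range (l * l'), ‖lam - r ((k + j : ℕ) : Fin l)‖)
        = (∏ i, ‖lam - r i‖) ^ l' from by
          rw [Nat.mul_comm]
          exact aux_prod_blocks (l := l) (fun i => ‖lam - r i‖) k l'] at h
  exact h

private lemma aux_rpow_iff (a b : ℝ) (ha : 0 ≤ a) (hb : 0 ≤ b) (l l' : ℕ)
    (hl : l ≠ 0) (hl' : l' ≠ 0) :
    a ^ ((1 : ℝ) / l) < b ^ ((1 : ℝ) / l') ↔ a ^ l' < b ^ l := by
  have hlr : (l : ℝ) ≠ 0 := Nat.cast_ne_zero.mpr hl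
  have hlr' : (l' : ℝ) ≠ 0 := Nat.cast_ne_zero.mpr hl'
  rw [← pow_lt_pow_iff_left₀ (Real.rpow_nonneg ha _) (Real.rpow_nonneg hb _)
      (Nat.mul_ne_zero hl hl'),
    ← Real.rpow_natCast (a ^ ((1 : ℝ) / l)) (l * l'),
    ← Real.rpow_natCast (b ^ ((1 : ℝ) / l')) (l * l'),
    ← Real.rpow_mul ha, ← Real.rpow_mul hb,
    show (1 : ℝ) / l * ((l * l' : ℕ) : ℝ) = ((l' : ℕ) : ℝ) by push_cast; field_simp,
    show (1 : ℝ) / l' * ((l * l' : ℕ) : ℝ) = ((l : ℕ) : ℝ) by push_cast; field_simp,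
    Real.rpow_natCast, Real.rpow_natCast]

/-- The point spectrum of the adjoint `B*` acting on `ℓ¹` (the transposed matrix,
`(B*x)_k = r_{k mod l + 1} x_k + s_{k mod l' + 1} x_{k+1}`) equals
`{λ : (|λ-r₁|⋯|λ-r_l|)^{1/l} < (|s₁|⋯|s_{l'}|)^{1/l'}}`. -/
theorem stmt_6 (l l' : ℕ) [NeZero l] [NeZero l'] (r : Fin l → ℂ) (s : Fin l' → ℂ)
    (hs : ∀ j, s j ≠ 0) (lam : ℂ) :
    (∃ x : ℕ → ℂ, x ≠ 0 ∧ Memℓp x 1 ∧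
        ∀ k : ℕ, r (↑k) * x k + s (↑k) * x (k + 1) = lam * x k) ↔
      (∏ i, ‖lam - r i‖) ^ ((1 : ℝ) / l) <
        (∏ j, ‖s j‖) ^ ((1 : ℝ) / l') := by
  have hl : l ≠ 0 := NeZero.ne l
  have hl' : l' ≠ 0 := NeZero.ne l'
  set a := ∏ i, ‖lam - r i‖ with ha_def
  set b := ∏ j, ‖s j‖ with hb_def
  have ha0 : 0 ≤ a := Finset.prod_nonneg fun i _ => norm_nonneg _
  have hb0 : 0 < b := Finset.prod_pos fun j _ => norm_pos_iff.mpr (hs j)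
  rw [aux_rpow_iff a b ha0 hb0.le l l' hl hl']
  set L := l * l' with hL
  have hLpos : 0 < L := Nat.pos_of_ne_zero (Nat.mul_ne_zero hl hl')
  constructor
  · rintro ⟨x, hx0, hx1, hrec⟩
    by_contra hcon
    push_neg at hcon
    -- x 0 ≠ 0
    have hstep : ∀ k : ℕ, s (k : Fin l') * x (k + 1) = (lam - r (k : Fin l)) * x k := by
      intro k; linear_combination hrec k
    have hx00 : x 0 ≠ 0 := by
      intro h0
      apply hx0
      have hall : ∀ k, x k = 0 := by
        intro k
        induction k with
        | zero => exact h0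
        | succ k ih =>
            have h := hstep k
            rw [ih, mul_zero] at h
            exact (mul_eq_zero.mp h).resolve_left (hs _)
      funext k
      exact hall k
    have hmono : ∀ m : ℕ, ‖x 0‖ ≤ ‖x (m * L)‖ := by
      intro m
      induction m with
      | zero => simp
      | succ m ih =>
          have hb := aux_block r s lam x hrec (m * L)
          have h1 : b ^ l * ‖x (m * L)‖ ≤ b ^ l * ‖x (m * L + L)‖ := by
            rw [hb]
            exact mul_le_mul_of_nonneg_right hcon (norm_nonneg _)
          have h2 : ‖x (m * L)‖ ≤ ‖x (m * L + L)‖ :=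
            le_of_mul_le_mul_left h1 (pow_pos hb0 l)
          rw [Nat.succ_mul]
          exact le_trans ih h2
    -- summability implies tendsto zero
    have hsum : Summable fun k => ‖x k‖ := by
      have := hx1.summable (by norm_num : 0 < (1 : ENNReal).toReal)
      simpa using this
    have htend : Tendsto (fun m : ℕ => ‖x (m * L)‖) atTop (𝓝 0) := by
      refine hsum.tendsto_atTop_zero.comp ?_
      exact Filter.tendsto_atTop_atTop.mpr fun n =>
        ⟨n, fun m hm => le_trans hm (Nat.le_mul_of_pos_right m hLpos)⟩
    have := ge_of_tendsto' htend hmono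
    exact absurd this (not_le.mpr (norm_pos_iff.mpr hx00))
  · intro h
    set x : ℕ → ℂ := fun k => ∏ j ∈ Finset.range k, ((lam - r (j : Fin l)) / s (j : Fin l'))
      with hx_def
    have hrec : ∀ k : ℕ, r (↑k) * x k + s (↑k) * x (k + 1) = lam * x k := by
      intro k
      have : x (k + 1) = x k * ((lam - r (k : Fin l)) / s (k : Fin l')) :=
        Finset.prod_range_succ _ k
      rw [this]
      have hsk : s (k : Fin l') ≠ 0 := hs _
      field_simp
      ring
    refine ⟨x, ?_, ?_, hrec⟩
    · intro hcontra
      have : x 0 = 0 := congrFun hcontra 0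
      simp [hx_def] at this
    · -- Memℓp
      apply memℓp_gen
      have hgoal : Summable fun k => ‖x k‖ := by
        by_cases ha : a = 0
        · -- some factor vanishes; x is eventually zero
          obtain ⟨i, _, hi⟩ := Finset.prod_eq_zero_iff.mp ha
          have hi' : lam - r i = 0 := by
            simpa using norm_eq_zero.mp hi
          apply summable_of_ne_finset_zero (s := Finset.range (i.val + 1))
          intro k hk
          simp only [Finset.mem_range, not_lt] at hk
          have : x k = 0 := by
            apply Finset.prod_eq_zero (Finset.mem_range.mpr (Nat.lt_of_lt_of_le (Nat.lt_succ_self _) hk))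
            rw [Fin.cast_val_eq_self, hi', zero_div]
          simp [this]
        · have hapos : 0 < a := lt_of_le_of_ne ha0 (Ne.symm ha)
          set ρ : ℝ := a ^ l' / b ^ l with hρ_def
          have hρ0 : 0 < ρ := div_pos (pow_pos hapos l') (pow_pos hb0 l)
          have hρ1 : ρ < 1 := (div_lt_one (pow_pos hb0 l)).mpr h
          set q : ℝ := ρ ^ ((1 : ℝ) / L) with hq_def
          have hq0 : 0 < q := Real.rpow_pos_of_pos hρ0 _
          have hq1 : q < 1 := Real.rpow_lt_one hρ0.le hρ1 (by positivity)
          have hqL : q ^ L = ρ := by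
            rw [hq_def, ← Real.rpow_natCast (ρ ^ ((1 : ℝ) / L)) L, ← Real.rpow_mul hρ0.le]
            rw [show (1 : ℝ) / L * (L : ℕ) = 1 by
              field_simp]
            exact Real.rpow_one ρ
          have hF : ∀ k, ‖x (k + L)‖ = ρ * ‖x k‖ := by
            intro k
            have hb := aux_block r s lam x hrec k
            rw [hρ_def]
            field_simp
            linarith [hb]
          have hFm : ∀ i m : ℕ, ‖x (i + m * L)‖ = ρ ^ m * ‖x i‖ := by
            intro i m
            induction m with
            | zero => simp
            | succ m ih =>
                rw [Nat.succ_mul, ← Nat.add_assoc, hF, ih, pow_succ]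
                ring
          set C : ℝ := ∑ i ∈ Finset.range L, ‖x i‖ with hC_def
          have hC0 : 0 ≤ C := Finset.sum_nonneg fun i _ => norm_nonneg _
          have hbound : ∀ k, ‖x k‖ ≤ (C * (q ^ (L - 1))⁻¹) * q ^ k := by
            intro k
            have hdecomp : k % L + (k / L) * L = k := Nat.mod_add_div' k L
            have hFk : ‖x k‖ = ρ ^ (k / L) * ‖x (k % L)‖ := by
              conv_lhs => rw [← hdecomp]
              exact hFm (k % L) (k / L)
            have hCk : ‖x (k % L)‖ ≤ C :=
              Finset.single_le_sum (f := fun i => ‖x i‖)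
                (fun i _ => norm_nonneg _)
                (Finset.mem_range.mpr (Nat.mod_lt k hLpos))
            have hexp : k ≤ L * (k / L) + (L - 1) := by
              have h1 := Nat.mod_lt k hLpos
              have h2 := Nat.div_add_mod k L
              omega
            have hρq : ρ ^ (k / L) ≤ (q ^ (L - 1))⁻¹ * q ^ k := by
              rw [← hqL, ← pow_mul]
              have hkey : q ^ (L * (k / L)) * q ^ (L - 1) ≤ q ^ k := by
                rw [← pow_add]
                exact pow_le_pow_of_le_one hq0.le hq1.le hexp
              rw [← div_eq_inv_mul, le_div_iff₀ (pow_pos hq0 _)]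
              exact hkey
            calc ‖x k‖ = ρ ^ (k / L) * ‖x (k % L)‖ := hFk
              _ ≤ ρ ^ (k / L) * C :=
                  mul_le_mul_of_nonneg_left hCk (pow_nonneg hρ0.le _)
              _ ≤ ((q ^ (L - 1))⁻¹ * q ^ k) * C :=
                  mul_le_mul_of_nonneg_right hρq hC0
              _ = (C * (q ^ (L - 1))⁻¹) * q ^ k := by ring
          exact Summable.of_nonneg_of_le (fun k => norm_nonneg _) hbound
            ((summable_geometric_of_lt_one hq0.le hq1).mul_left _)
      simpa using hgoal
end

section
/- If λ ∈ ℂ satisfies (|λ - r₁|⋯|λ - r_l|)^{1/l} < (|s₁|⋯|s_{l'}|)^{1/l'}, then any complex sequence x = (x_k) satisfying r_{k mod l + 1} x_k + s_{k mod l' + 1} x_{k+1} = λ x_k for all k ≥ 0 with x₀ ≠ 0 belongs to ℓ¹; conversely, if (|λ - r₁|⋯|λ - r_l|)^{1/l} ≥ (|s₁|⋯|s_{l'}|)^{1/l'} and x₀ ≠ 0, then x ∉ ℓ¹. -/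
open Filter Topology Finset Fin.NatCast

private lemma aux_shift {M : Type*} [CommMonoid M] (g : ℕ → M) (p : ℕ)
    (hper : ∀ k, g (k + p) = g k) :
    ∀ k, ∏ j ∈ Finset.range p, g (k + j) = ∏ j ∈ Finset.range p, g j := by
  intro k
  induction k with
  | zero => simp
  | succ k ih =>
    rw [← ih]
    rcases Nat.eq_zero_or_pos p with hp | hp
    · simp [hp]
    obtain ⟨m, rfl⟩ := Nat.exists_eq_add_of_lt hp
    rw [Finset.prod_range_succ, Finset.prod_range_succ']
    simp only [Nat.add_zero, zero_add]
    have h1 : k + 1 + m = k + (m + 1) := by ring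
    have hpk : g (k + (m + 1)) = g k := by simpa using hper k
    rw [h1, hpk]
    congr 1
    apply Finset.prod_congr rfl
    intro j _
    congr 1
    ring

private lemma aux_mult {M : Type*} [CommMonoid M] (g : ℕ → M) (p : ℕ)
    (hper : ∀ k, g (k + p) = g k) :
    ∀ n k, ∏ j ∈ Finset.range (n * p), g (k + j) = (∏ j ∈ Finset.range p, g j) ^ n := by
  intro n
  induction n with
  | zero => simp
  | succ n ih =>
    intro k
    have : (n + 1) * p = n * p + p := by ring
    rw [this, Finset.prod_range_add, ih k, pow_succ]
    congr 1
    have : ∀ j, k + (n * p + j) = (k + n * p) + j := fun j => by ring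
    calc ∏ j ∈ Finset.range p, g (k + (n * p + j))
        = ∏ j ∈ Finset.range p, g ((k + n * p) + j) := by
          apply Finset.prod_congr rfl; intro j _; rw [this j]
      _ = ∏ j ∈ Finset.range p, g j := aux_shift g p hper _

/-- If `x` solves the transposed eigenvalue recurrence with `x₀ ≠ 0`, then
`x ∈ ℓ¹` when `(|λ-r₁|⋯|λ-r_l|)^{1/l} < (|s₁|⋯|s_{l'}|)^{1/l'}`, and `x ∉ ℓ¹` when
`(|λ-r₁|⋯|λ-r_l|)^{1/l} ≥ (|s₁|⋯|s_{l'}|)^{1/l'}`. -/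
theorem stmt_7 (l l' : ℕ) [NeZero l] [NeZero l'] (r : Fin l → ℂ) (s : Fin l' → ℂ)
    (hs : ∀ j, s j ≠ 0) (lam : ℂ) (x : ℕ → ℂ)
    (hrec : ∀ k : ℕ, r (↑k) * x k + s (↑k) * x (k + 1) = lam * x k)
    (hx0 : x 0 ≠ 0) :
    ((∏ i, ‖lam - r i‖) ^ ((1 : ℝ) / l) <
        (∏ j, ‖s j‖) ^ ((1 : ℝ) / l') → Memℓp x 1) ∧
    ((∏ i, ‖lam - r i‖) ^ ((1 : ℝ) / l) ≥
        (∏ j, ‖s j‖) ^ ((1 : ℝ) / l') → ¬ Memℓp x 1) := by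
  have hl : l ≠ 0 := NeZero.ne l
  have hl' : l' ≠ 0 := NeZero.ne l'
  set L : ℕ := Nat.lcm l l' with hL
  have hLne : L ≠ 0 := Nat.lcm_ne_zero hl hl'
  have hLpos : 0 < L := Nat.pos_of_ne_zero hLne
  have hdl : l ∣ L := Nat.dvd_lcm_left l l'
  have hdl' : l' ∣ L := Nat.dvd_lcm_right l l'
  -- step functions
  set g1 : ℕ → ℂ := fun k => lam - r (↑k) with hg1
  set g2 : ℕ → ℂ := fun k => s (↑k) with hg2
  set g : ℕ → ℂ := fun k => g1 k / g2 k with hg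
  have hg2ne : ∀ k, g2 k ≠ 0 := fun k => hs _
  -- periodicity of g
  have hper1 : ∀ k, g1 (k + l) = g1 k := by
    intro k; simp only [hg1]; congr 1
    push_cast [Fin.natCast_self]; simp
  have hper2 : ∀ k, g2 (k + l') = g2 k := by
    intro k; simp only [hg2]; congr 1
    push_cast [Fin.natCast_self]; simp
  have hperm : ∀ (h : ℕ → ℂ) (p : ℕ), (∀ k, h (k + p) = h k) → ∀ m k, h (k + m * p) = h k := by
    intro h p hp m
    induction m with
    | zero => simp
    | succ m ih =>
      intro k
      have : k + (m + 1) * p = (k + m * p) + p := by ring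
      rw [this, hp, ih]
  have hgper : ∀ k, g (k + L) = g k := by
    intro k
    obtain ⟨t, ht⟩ := hdl
    obtain ⟨t', ht'⟩ := hdl'
    simp only [hg]
    rw [show k + L = k + t * l by rw [ht, Nat.mul_comm], hperm g1 l hper1 t k,
      show k + t * l = k + t' * l' by rw [Nat.mul_comm t l, ← ht, ht', Nat.mul_comm],
      hperm g2 l' hper2 t' k]
  -- step relation
  have hstep : ∀ k, x (k + 1) = g k * x k := by
    intro k
    have h := hrec k
    have h2 : s (↑k) * x (k + 1) = (lam - r (↑k)) * x k := by linear_combination h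
    show x (k + 1) = (lam - r (↑k)) / s (↑k) * x k
    rw [div_mul_eq_mul_div, eq_div_iff (hs _)]
    linear_combination h2
  -- iterated relation
  have hiter : ∀ k n, x (k + n) = (∏ j ∈ Finset.range n, g (k + j)) * x k := by
    intro k n
    induction n with
    | zero => simp
    | succ n ih =>
      rw [show k + (n + 1) = (k + n) + 1 by ring, hstep, ih, Finset.prod_range_succ]
      ring
  set C : ℂ := ∏ j ∈ Finset.range L, g j with hC
  have hxL : ∀ q m, x (m + q * L) = C ^ q * x m := by
    intro q m
    rw [hiter m (q * L), aux_mult g L hgper q m]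
  -- norms
  set P : ℝ := ∏ i, ‖lam - r i‖ with hP
  set Q : ℝ := ∏ j, ‖s j‖ with hQ
  have hP0 : 0 ≤ P := Finset.prod_nonneg fun i _ => (norm_nonneg _)
  have hQ0 : 0 < Q := Finset.prod_pos fun j _ => (norm_pos_iff.mpr (hs j))
  set t : ℕ := L / l with htdef
  set t' : ℕ := L / l' with ht'def
  have htl : t * l = L := Nat.div_mul_cancel hdl
  have ht'l : t' * l' = L := Nat.div_mul_cancel hdl'
  have habsC : ‖C‖ = P ^ t / Q ^ t' := by
    have e1 : ∏ j ∈ Finset.range L, g1 j = (∏ j ∈ Finset.range l, g1 j) ^ t := by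
      have := aux_mult g1 l hper1 t 0
      simpa [htl] using this
    have e2 : ∏ j ∈ Finset.range L, g2 j = (∏ j ∈ Finset.range l', g2 j) ^ t' := by
      have := aux_mult g2 l' hper2 t' 0
      simpa [ht'l] using this
    have e3 : ∏ j ∈ Finset.range l, g1 j = ∏ i : Fin l, (lam - r i) := by
      rw [Finset.prod_range fun j => g1 j]
      apply Finset.prod_congr rfl
      intro i _
      simp [hg1, Fin.cast_val_eq_self]
    have e4 : ∏ j ∈ Finset.range l', g2 j = ∏ j : Fin l', s j := by
      rw [Finset.prod_range fun j => g2 j]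
      apply Finset.prod_congr rfl
      intro i _
      simp [hg2, Fin.cast_val_eq_self]
    have : C = (∏ i : Fin l, (lam - r i)) ^ t / (∏ j : Fin l', s j) ^ t' := by
      rw [hC, show (fun k => g k) = fun k => g1 k / g2 k from rfl]
      rw [Finset.prod_div_distrib, e1, e2, e3, e4]
    rw [this]
    rw [norm_div, norm_pow, norm_pow, norm_prod, norm_prod]
  -- comparison
  set a : ℝ := P ^ ((1 : ℝ) / l) with ha
  set b : ℝ := Q ^ ((1 : ℝ) / l') with hb
  have ha0 : 0 ≤ a := Real.rpow_nonneg hP0 _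
  have hb0 : 0 < b := Real.rpow_pos_of_pos hQ0 _
  have haL : a ^ L = P ^ t := by
    rw [ha, ← Real.rpow_natCast (P ^ ((1:ℝ)/l)) L, ← Real.rpow_mul hP0]
    rw [← Real.rpow_natCast P t]
    congr 1
    have : (l : ℝ) ≠ 0 := Nat.cast_ne_zero.mpr hl
    field_simp
    rw [← htl]
    push_cast
    ring
  have hbL : b ^ L = Q ^ t' := by
    rw [hb, ← Real.rpow_natCast (Q ^ ((1:ℝ)/l')) L, ← Real.rpow_mul hQ0.le]
    rw [← Real.rpow_natCast Q t']
    congr 1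
    have : (l' : ℝ) ≠ 0 := Nat.cast_ne_zero.mpr hl'
    field_simp
    rw [← ht'l]
    push_cast
    ring
  have habsC' : ‖C‖ = a ^ L / b ^ L := by rw [habsC, haL, hbL]
  constructor
  · -- summable case
    intro hlt
    have hρ : ‖C‖ < 1 := by
      rw [habsC', div_lt_one (pow_pos hb0 L)]
      exact pow_lt_pow_left₀ hlt ha0 hLne
    set ρ : ℝ := ‖C‖ with hρdef
    have hρ0 : 0 ≤ ρ := norm_nonneg _
    set M : ℝ := ∑ m ∈ Finset.range L, ‖x m‖ with hM
    have hbound : ∀ k, ‖x k‖ ≤ ρ ^ (k / L) * M := by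
      intro k
      have hk : x k = C ^ (k / L) * x (k % L) := by
        have := hxL (k / L) (k % L)
        rw [Nat.mod_add_div' k L] at this
        exact this
      rw [hk, norm_mul, norm_pow]
      apply mul_le_mul_of_nonneg_left _ (pow_nonneg hρ0 _)
      exact Finset.single_le_sum (fun m _ => norm_nonneg _)
        (Finset.mem_range.mpr (Nat.mod_lt k hLpos))
    have hsumgeom : Summable fun q : ℕ => ρ ^ q := summable_geometric_of_lt_one hρ0 hρ
    have hgeo_le : ∀ n, ∑ q ∈ Finset.range n, ρ ^ q ≤ (1 - ρ)⁻¹ := by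
      intro n
      have := Summable.sum_le_tsum (Finset.range n) (fun i _ => pow_nonneg hρ0 i) hsumgeom
      rwa [tsum_geometric_of_lt_one hρ0 hρ] at this
    have hblock : ∀ n, ∑ k ∈ Finset.range (n * L), ρ ^ (k / L)
        = ∑ q ∈ Finset.range n, (L : ℝ) * ρ ^ q := by
      intro n
      induction n with
      | zero => simp
      | succ n ih =>
        rw [show (n + 1) * L = n * L + L by ring, Finset.sum_range_add, ih,
          Finset.sum_range_succ]
        congr 1
        have : ∀ j ∈ Finset.range L, ρ ^ ((n * L + j) / L) = ρ ^ n := by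
          intro j hj
          congr 1
          rw [mul_comm n L, Nat.mul_add_div hLpos]
          simp [Nat.div_eq_of_lt (Finset.mem_range.mp hj)]
        rw [Finset.sum_congr rfl this]
        simp [mul_comm]
    have hsum : Summable fun k : ℕ => ρ ^ (k / L) := by
      apply summable_of_sum_range_le (c := (L : ℝ) * (1 - ρ)⁻¹)
        (fun n => pow_nonneg hρ0 _)
      intro n
      calc ∑ k ∈ Finset.range n, ρ ^ (k / L)
          ≤ ∑ k ∈ Finset.range (n * L), ρ ^ (k / L) := by
            apply Finset.sum_le_sum_of_subset_of_nonneg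
            · exact Finset.range_subset_range.mpr (Nat.le_mul_of_pos_right n hLpos)
            · intro k _ _; exact pow_nonneg hρ0 _
        _ = ∑ q ∈ Finset.range n, (L : ℝ) * ρ ^ q := hblock n
        _ = (L : ℝ) * ∑ q ∈ Finset.range n, ρ ^ q := by rw [Finset.mul_sum]
        _ ≤ (L : ℝ) * (1 - ρ)⁻¹ := by
            apply mul_le_mul_of_nonneg_left (hgeo_le n) (Nat.cast_nonneg L)
    have hsummable : Summable fun k => ‖x k‖ := by
      apply Summable.of_nonneg_of_le (fun k => norm_nonneg _) hbound
      exact hsum.mul_right M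
    apply memℓp_gen
    have : (1 : ENNReal).toReal = 1 := by simp
    rw [this]
    simpa [Real.rpow_one] using hsummable
  · -- non-summable case
    intro hge
    have hane : a ≠ 0 := by
      intro h
      rw [h] at hge
      exact absurd (lt_of_lt_of_le hb0 hge) (lt_irrefl 0)
    have hPpos : 0 < P := by
      rcases hP0.eq_or_lt with h | h
      · exfalso; apply hane; rw [ha, ← h, Real.zero_rpow]
        positivity
      · exact h
    have hρ : 1 ≤ ‖C‖ := by
      rw [habsC', le_div_iff₀ (pow_pos hb0 L), one_mul]
      exact pow_le_pow_left₀ hb0.le hge L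
    -- all x k nonzero
    have hg1ne : ∀ k, g1 k ≠ 0 := by
      intro k
      simp only [hg1]
      intro h
      have : ‖lam - r (↑k)‖ = 0 := by rw [h]; simp
      have hmem : ‖lam - r (↑k)‖ ∈
          (fun i => ‖lam - r i‖) '' Set.univ := ⟨↑k, trivial, rfl⟩
      have : P = 0 := by
        rw [hP]
        apply Finset.prod_eq_zero (Finset.mem_univ (↑k : Fin l))
        rw [h]; simp
      exact absurd this (ne_of_gt hPpos)
    have hxne : ∀ k, x k ≠ 0 := by
      intro k
      induction k with
      | zero => exact hx0
      | succ k ih =>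
        rw [hstep k]
        exact mul_ne_zero (div_ne_zero (hg1ne k) (hg2ne k)) ih
    intro hmem
    have hsummable : Summable fun k => ‖x k‖ := by
      have := hmem.summable (p := 1) (by simp)
      simpa [Real.rpow_one] using this
    have htend : Tendsto (fun k => ‖x k‖) atTop (𝓝 0) := hsummable.tendsto_atTop_zero
    have htend2 : Tendsto (fun q : ℕ => ‖x (q * L)‖) atTop (𝓝 0) := by
      apply htend.comp
      exact tendsto_atTop_atTop_of_monotone (fun a b hab => Nat.mul_le_mul_right L hab)
        (fun n => ⟨n, Nat.le_mul_of_pos_right n hLpos⟩)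
    have hlb : ∀ q : ℕ, ‖x 0‖ ≤ ‖x (q * L)‖ := by
      intro q
      have := hxL q 0
      rw [zero_add] at this
      rw [this, norm_mul, norm_pow]
      calc ‖x 0‖ = 1 * ‖x 0‖ := (one_mul _).symm
        _ ≤ ‖C‖ ^ q * ‖x 0‖ := by
            apply mul_le_mul_of_nonneg_right (one_le_pow₀ hρ) (norm_nonneg _)
    have : ‖x 0‖ ≤ 0 := le_of_tendsto_of_tendsto tendsto_const_nhds htend2
      (Eventually.of_forall hlb)
    exact absurd this (not_le.mpr (norm_pos_iff.mpr hx0))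
end

section
/- The residual spectrum of B on c₀ equals {λ ∈ ℂ : (|λ - r₁|⋯|λ - r_l|)^{1/l} < (|s₁|⋯|s_{l'}|)^{1/l'}}. -/
set_option linter.unusedSectionVars false
set_option maxHeartbeats 1000000

open Filter Topology Finset
open Fin.NatCast

noncomputable def Complex.abs : AbsoluteValue ℂ ℝ := NormedField.toAbsoluteValue ℂ

lemma Complex.abs_apply (z : ℂ) : Complex.abs z = ‖z‖ := rfl

lemma Complex.abs_ofReal (x : ℝ) : Complex.abs (x : ℂ) = |x| := by
  show ‖(x : ℂ)‖ = |x|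
  rw [Complex.norm_real, Real.norm_eq_abs]

namespace Stmt8Aux

variable {l l' : ℕ} [NeZero l] [NeZero l'] (r : Fin l → ℂ) (s : Fin l' → ℂ) (lam : ℂ)

lemma norm_apply_le (f : ZeroAtInftyContinuousMap ℕ ℂ) (k : ℕ) : Complex.abs (f k) ≤ ‖f‖ := by
  rw [← ZeroAtInftyContinuousMap.norm_toBCF_eq_norm]
  exact (f.toBCF.norm_coe_le_norm k)

lemma norm_le_of_forall {f : ZeroAtInftyContinuousMap ℕ ℂ} {C : ℝ} (h0 : 0 ≤ C) (h : ∀ k, Complex.abs (f k) ≤ C) :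
    ‖f‖ ≤ C := by
  rw [← ZeroAtInftyContinuousMap.norm_toBCF_eq_norm]
  exact (BoundedContinuousFunction.norm_le h0).2 h

noncomputable def delta (n : ℕ) : ZeroAtInftyContinuousMap ℕ ℂ :=
  { toFun := fun k => if k = n then 1 else 0
    continuous_toFun := continuous_of_discreteTopology
    zero_at_infty' := by
      rw [cocompact_eq_atTop]
      apply Tendsto.congr' (f₁ := fun _ => (0 : ℂ))
      · filter_upwards [eventually_gt_atTop n] with k hk
        simp [Nat.ne_of_gt hk]
      · exact tendsto_const_nhds }

@[simp] lemma delta_apply (n k : ℕ) : delta n k = if k = n then 1 else 0 := rfl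

lemma sum_apply {ι : Type*} (t : Finset ι) (g : ι → ZeroAtInftyContinuousMap ℕ ℂ) (j : ℕ) :
    (∑ i ∈ t, g i) j = ∑ i ∈ t, g i j := by
  classical
  induction t using Finset.induction with
  | empty => simp
  | insert _ _ h ih => simp [Finset.sum_insert h, ih]

lemma tendsto_partial_sums (x : ZeroAtInftyContinuousMap ℕ ℂ) :
    Tendsto (fun N => ∑ k ∈ range N, x k • delta k) atTop (𝓝 x) := by
  rw [Metric.tendsto_atTop]
  intro ε hε
  have hx : Tendsto (fun k => x k) atTop (𝓝 0) := by
    have := ZeroAtInftyContinuousMap.zero_at_infty' x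
    rwa [cocompact_eq_atTop] at this
  rw [Metric.tendsto_nhds] at hx
  obtain ⟨N₀, hN₀⟩ := (eventually_atTop).1 (hx (ε/2) (by linarith))
  refine ⟨N₀, fun N hN => ?_⟩
  rw [dist_eq_norm]
  have hval : ∀ j, Complex.abs (((∑ k ∈ range N, x k • delta k) - x) j) ≤ ε / 2 := by
    intro j
    have : (∑ k ∈ range N, x k • delta k) j = if j < N then x j else 0 := by
      rw [sum_apply]
      simp only [ZeroAtInftyContinuousMap.smul_apply, delta_apply, smul_eq_mul]
      simp only [mul_ite, mul_one, mul_zero]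
      rw [Finset.sum_ite_eq (range N) j x]
      simp [Finset.mem_range]
    rw [ZeroAtInftyContinuousMap.sub_apply, this]
    by_cases hj : j < N
    · simp only [hj, if_pos, sub_self, map_zero]
      linarith
    · simp only [hj, if_neg]
      have : N₀ ≤ j := le_trans hN (le_of_not_gt hj)
      have := hN₀ j this
      rw [dist_zero_right] at this
      simpa [Complex.abs_apply] using (le_of_lt this)
  calc ‖(∑ k ∈ range N, x k • delta k) - x‖ ≤ ε / 2 :=
        norm_le_of_forall (by linarith) hval
    _ < ε := by linarith

lemma eq_zero_of_delta (φ : ZeroAtInftyContinuousMap ℕ ℂ →L[ℂ] ℂ) (h : ∀ n, φ (delta n) = 0) : φ = 0 := by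
  ext x
  have h1 : Tendsto (fun N => φ (∑ k ∈ range N, x k • delta k)) atTop (𝓝 (φ x)) :=
    (φ.continuous.tendsto x).comp (tendsto_partial_sums x)
  have h2 : (fun N => φ (∑ k ∈ range N, x k • delta k)) = fun _ => (0 : ℂ) := by
    funext N
    rw [map_sum]
    apply Finset.sum_eq_zero
    intro k _
    rw [map_smul, h k, smul_zero]
  rw [h2] at h1
  have := tendsto_nhds_unique h1 tendsto_const_nhds
  simp only [ContinuousLinearMap.zero_apply]
  exact this

lemma summable_mul (y : ℕ → ℂ) (hy : Summable fun k => Complex.abs (y k)) (x : ZeroAtInftyContinuousMap ℕ ℂ) :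
    Summable fun k => y k * x k := by
  apply Summable.of_norm_bounded (hy.mul_right ‖x‖)
  intro k
  rw [norm_mul]
  exact mul_le_mul_of_nonneg_left (norm_apply_le x k) (norm_nonneg _)

noncomputable def phi (y : ℕ → ℂ) (hy : Summable fun k => Complex.abs (y k)) : ZeroAtInftyContinuousMap ℕ ℂ →L[ℂ] ℂ :=
  LinearMap.mkContinuous
    { toFun := fun x => ∑' k, y k * x k
      map_add' := by
        intro a b
        rw [← Summable.tsum_add (summable_mul y hy a) (summable_mul y hy b)]
        congr 1
        funext k
        simp [mul_add]
      map_smul' := by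
        intro c a
        simp only [RingHom.id_apply, smul_eq_mul]
        rw [← tsum_mul_left]
        congr 1
        funext k
        simp only [ZeroAtInftyContinuousMap.smul_apply, smul_eq_mul, RingHom.id_apply]
        ring }
    (∑' k, Complex.abs (y k))
    (by
      intro x
      simp only [LinearMap.coe_mk, AddHom.coe_mk]
      calc ‖∑' k, y k * x k‖ ≤ ∑' k, ‖y k * x k‖ :=
            norm_tsum_le_tsum_norm ((summable_mul y hy x).norm)
        _ ≤ ∑' k, Complex.abs (y k) * ‖x‖ := by
            apply Summable.tsum_le_tsum _ (summable_mul y hy x).norm (hy.mul_right ‖x‖)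
            intro k
            rw [norm_mul]
            exact mul_le_mul_of_nonneg_left (norm_apply_le x k) (norm_nonneg _)
        _ = (∑' k, Complex.abs (y k)) * ‖x‖ := tsum_mul_right)

lemma phi_apply (y : ℕ → ℂ) (hy : Summable fun k => Complex.abs (y k)) (x : ZeroAtInftyContinuousMap ℕ ℂ) :
    phi y hy x = ∑' k, y k * x k := rfl

lemma exists_functional {V : Type*} [NormedAddCommGroup V] [NormedSpace ℂ V]
    (S : Submodule ℂ V) (x : V) (hx : x ∉ closure (S : Set V)) :
    ∃ φ : V →L[ℂ] ℂ, (∀ a ∈ S, φ a = 0) ∧ φ x ≠ 0 := by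
  have hconv : Convex ℝ (closure (S : Set V)) := by
    apply Convex.closure
    exact (S.restrictScalars ℝ).convex
  obtain ⟨f, u, hfs, hux⟩ :=
    RCLike.geometric_hahn_banach_closed_point (𝕜 := ℂ) hconv isClosed_closure hx
  refine ⟨f, ?_, ?_⟩
  · intro a ha
    by_contra hfa
    have hmem : ∀ c : ℂ, c • a ∈ S := fun c => S.smul_mem c ha
    have hlt : ∀ t : ℝ, t < u := by
      intro t
      have := hfs (((t : ℂ) / f a) • a) (subset_closure (hmem _))
      rw [map_smul, smul_eq_mul, div_mul_cancel₀ _ hfa] at this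
      simpa using this
    exact absurd (hlt u) (lt_irrefl u)
  · intro hfx
    have h0 : (0 : ℝ) < u := by
      have := hfs 0 (subset_closure S.zero_mem)
      simpa using this
    rw [hfx] at hux
    simp at hux
    linarith

lemma prod_block (f : ℕ → ℝ) (T : ℕ) (hper : ∀ n, f (n + T) = f n) (h0 : ∀ n, f n ≠ 0) (a : ℕ) :
    ∏ j ∈ range T, f (a + j) = ∏ j ∈ range T, f j := by
  induction a with
  | zero => simp
  | succ a ih =>
    have key : f a * ∏ j ∈ range T, f (a + 1 + j) = (∏ j ∈ range T, f (a + j)) * f (a + T) := by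
      have h1 : ∏ j ∈ range (T + 1), f (a + j)
          = (∏ j ∈ range T, f (a + (j + 1))) * f (a + 0) := Finset.prod_range_succ' _ _
      have h2 : ∏ j ∈ range (T + 1), f (a + j)
          = (∏ j ∈ range T, f (a + j)) * f (a + T) := Finset.prod_range_succ _ _
      rw [h2] at h1
      rw [mul_comm (f a)]
      rw [h1]
      congr 1
      · apply Finset.prod_congr rfl
        intro j _
        congr 1
        omega
    rw [hper a] at key
    have := mul_left_cancel₀ (h0 a)
      (by rw [key, mul_comm] :
        f a * ∏ j ∈ range T, f (a + 1 + j) = f a * ∏ j ∈ range T, f (a + j))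
    rw [this, ih]

lemma per_iter (g : ℕ → ℝ) (T : ℕ) (hper : ∀ n, g (n + T) = g n) (q n : ℕ) :
    g (q * T + n) = g n := by
  induction q with
  | zero => simp
  | succ q ih =>
    have : (q + 1) * T + n = (q * T + n) + T := by ring
    rw [this, hper, ih]

lemma prod_range_mul_of_periodic (g : ℕ → ℝ) (T : ℕ) (hper : ∀ n, g (n + T) = g n)
    (h0 : ∀ n, g n ≠ 0) (q : ℕ) :
    ∏ j ∈ range (q * T), g j = (∏ j ∈ range T, g j) ^ q := by
  induction q with
  | zero => simp
  | succ q ih =>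
    have : (q + 1) * T = q * T + T := by ring
    rw [this, Finset.prod_range_add, ih, prod_block g T hper h0, pow_succ]

lemma prod_range_decomp (g : ℕ → ℝ) (T : ℕ) (hper : ∀ n, g (n + T) = g n)
    (h0 : ∀ n, g n ≠ 0) (q m : ℕ) :
    ∏ j ∈ range (q * T + m), g j = (∏ j ∈ range T, g j) ^ q * ∏ j ∈ range m, g j := by
  rw [Finset.prod_range_add, prod_range_mul_of_periodic g T hper h0]
  congr 1
  apply Finset.prod_congr rfl
  intro j _
  exact per_iter g T hper q j

lemma abs_rec (g : ℕ → ℝ) (w : ℕ → ℂ)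
    (h : ∀ k, Complex.abs (w (k + 1)) = g k * Complex.abs (w k)) (n : ℕ) :
    Complex.abs (w n) = (∏ j ∈ range n, g j) * Complex.abs (w 0) := by
  induction n with
  | zero => simp
  | succ n ih => rw [h n, ih, Finset.prod_range_succ]; ring

lemma summable_of_periodic_ratio (g : ℕ → ℝ) (T : ℕ) (hT : 0 < T)
    (hgpos : ∀ n, 0 < g n) (hper : ∀ n, g (n + T) = g n)
    (hP : ∏ j ∈ range T, g j < 1) (w : ℕ → ℂ)
    (hw : ∀ n, Complex.abs (w n) = (∏ j ∈ range n, g j) * Complex.abs (w 0)) :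
    Summable fun n => Complex.abs (w n) := by
  set P : ℝ := ∏ j ∈ range T, g j with hPdef
  have hPpos : 0 < P := Finset.prod_pos fun j _ => hgpos j
  set ρ : ℝ := P ^ ((1 : ℝ) / T) with hρdef
  have hρpos : 0 < ρ := Real.rpow_pos_of_pos hPpos _
  have hρlt : ρ < 1 := Real.rpow_lt_one hPpos.le hP (by positivity)
  have hρT : ρ ^ T = P := by
    rw [hρdef, ← Real.rpow_natCast (P ^ ((1 : ℝ) / T)) T, ← Real.rpow_mul hPpos.le]
    rw [show (1 : ℝ) / T * (T : ℝ) = 1 by field_simp]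
    exact Real.rpow_one P
  set C₀ : ℝ := (∑ m ∈ range T, ∏ j ∈ range m, g j) * Complex.abs (w 0) * (ρ ^ T)⁻¹ with hC₀
  have hbound : ∀ n, Complex.abs (w n) ≤ C₀ * ρ ^ n := by
    intro n
    have hdm : (n / T) * T + n % T = n := by
      rw [mul_comm]
      exact Nat.div_add_mod n T
    have hw' : Complex.abs (w n) = P ^ (n / T) * (∏ j ∈ range (n % T), g j) * Complex.abs (w 0) := by
      have hsplit := prod_range_decomp g T hper (fun j => (hgpos j).ne') (n / T) (n % T)
      rw [hdm] at hsplit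
      rw [hw n, hsplit]
    have hterm : (∏ j ∈ range (n % T), g j) ≤ ∑ m ∈ range T, ∏ j ∈ range m, g j := by
      apply Finset.single_le_sum (f := fun m => ∏ j ∈ range m, g j)
      · intro m _
        exact (Finset.prod_pos fun j _ => hgpos j).le
      · exact Finset.mem_range.2 (Nat.mod_lt n hT)
    have hpow : P ^ (n / T) ≤ ρ ^ n * (ρ ^ T)⁻¹ := by
      have h1 : P ^ (n / T) = ρ ^ (T * (n / T)) := by rw [pow_mul, hρT]
      have h2 : n ≤ T * (n / T) + T := by
        have h4 := Nat.mod_lt n hT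
        have hdm := Nat.div_add_mod n T
        omega
      have h3 : ρ ^ (T * (n / T) + T) ≤ ρ ^ n := pow_le_pow_of_le_one hρpos.le hρlt.le h2
      rw [pow_add] at h3
      rw [h1]
      rw [← mul_le_mul_iff_left₀ (pow_pos hρpos T)]
      calc ρ ^ (T * (n / T)) * ρ ^ T ≤ ρ ^ n := h3
        _ = ρ ^ n * (ρ ^ T)⁻¹ * ρ ^ T := by
            field_simp
    calc Complex.abs (w n)
        = P ^ (n / T) * ((∏ j ∈ range (n % T), g j) * Complex.abs (w 0)) := by rw [hw']; ring
      _ ≤ (ρ ^ n * (ρ ^ T)⁻¹) * ((∑ m ∈ range T, ∏ j ∈ range m, g j) * Complex.abs (w 0)) := by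
          apply mul_le_mul hpow
          · exact mul_le_mul_of_nonneg_right hterm (by positivity)
          · exact mul_nonneg (Finset.prod_nonneg fun j _ => (hgpos j).le) (by positivity)
          · have : 0 < ρ ^ n * (ρ ^ T)⁻¹ := by positivity
            linarith
      _ = C₀ * ρ ^ n := by rw [hC₀]; ring
  apply Summable.of_nonneg_of_le (fun n => by positivity) hbound
  exact (summable_geometric_of_lt_one hρpos.le hρlt).mul_left C₀

/-- product of a periodic, nonvanishing function over a full period is shift invariant -/

lemma prod_range_mul {n : ℕ} [NeZero n] (G : Fin n → ℝ) (m : ℕ) :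
    ∏ j ∈ range (n * m), G (↑j) = (∏ i, G i) ^ m := by
  induction m with
  | zero => simp
  | succ m ih =>
    have : n * (m + 1) = n * m + n := by ring
    rw [this, Finset.prod_range_add, ih]
    have hblock : ∏ j ∈ range n, G (↑(n * m + j)) = ∏ i, G i := by
      have hcast : ∀ j : ℕ, ((n * m + j : ℕ) : Fin n) = (j : Fin n) := by
        intro j
        push_cast
        simp [Fin.natCast_self]
      have huniv : ∏ i, G i = ∏ j ∈ range n, G (↑j) := by
        rw [← Fin.prod_univ_eq_prod_range (fun j => G (↑j)) n]
        apply Finset.prod_congr rfl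
        intro i _
        rw [Fin.cast_val_eq_self]
      rw [huniv]
      apply Finset.prod_congr rfl
      intro j _
      rw [hcast j]
    rw [hblock, pow_succ]

lemma rpow_iff {a c : ℝ} (ha : 0 ≤ a) (hc : 0 < c) (l l' : ℕ) (hl : 0 < l) (hl' : 0 < l') :
    a ^ ((1 : ℝ) / l) < c ^ ((1 : ℝ) / l') ↔ a ^ l' < c ^ l := by
  have h1 : ((a ^ ((1 : ℝ) / l)) ^ (l * l' : ℕ) : ℝ) = a ^ l' := by
    rw [← Real.rpow_natCast (a ^ ((1 : ℝ) / l)) (l * l'), ← Real.rpow_mul ha]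
    rw [show (1 : ℝ) / l * ((l * l' : ℕ) : ℝ) = (l' : ℝ) by
      push_cast
      field_simp]
    rw [Real.rpow_natCast]
  have h2 : ((c ^ ((1 : ℝ) / l')) ^ (l * l' : ℕ) : ℝ) = c ^ l := by
    rw [← Real.rpow_natCast (c ^ ((1 : ℝ) / l')) (l * l'), ← Real.rpow_mul hc.le]
    rw [show (1 : ℝ) / l' * ((l * l' : ℕ) : ℝ) = (l : ℝ) by
      push_cast
      field_simp]
    rw [Real.rpow_natCast]
  rw [← h1, ← h2]
  constructor
  · intro h
    exact pow_lt_pow_left₀ h (Real.rpow_nonneg ha _) (by positivity)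
  · intro h
    have h3 : 0 ≤ a ^ ((1 : ℝ) / l) := Real.rpow_nonneg ha _
    have h4 : 0 ≤ c ^ ((1 : ℝ) / l') := Real.rpow_nonneg hc.le _
    by_contra hcon
    push_neg at hcon
    exact absurd (pow_le_pow_left₀ h4 hcon (l * l')) (not_le.2 h)

lemma cast_period_l (k : ℕ) : ((k + l * l' : ℕ) : Fin l) = (k : Fin l) := by
  push_cast
  simp [Fin.natCast_self]

lemma cast_period_l' (k : ℕ) : ((k + l * l' : ℕ) : Fin l') = (k : Fin l') := by
  push_cast
  simp [Fin.natCast_self]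

noncomputable def ffun : ℕ → ℝ :=
  fun k => Complex.abs (lam - r ↑k) / Complex.abs (s ↑k)

lemma ffun_period (n : ℕ) : ffun r s lam (n + l * l') = ffun r s lam n := by
  unfold ffun
  rw [cast_period_l, cast_period_l']

noncomputable def gfun : ℕ → ℝ :=
  fun k => Complex.abs (lam - r ↑(k + 1)) / Complex.abs (s ↑k)

lemma gfun_period (n : ℕ) : gfun r s lam (n + l * l') = gfun r s lam n := by
  unfold gfun
  have : (n + l * l' + 1) = (n + 1) + l * l' := by ring
  rw [this, cast_period_l, cast_period_l']

lemma ffun_prod :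
    ∏ j ∈ range (l * l'), ffun r s lam j
      = (∏ i, Complex.abs (lam - r i)) ^ l' / (∏ j, Complex.abs (s j)) ^ l := by
  unfold ffun
  rw [Finset.prod_div_distrib]
  congr 1
  · exact prod_range_mul (fun i => Complex.abs (lam - r i)) l'
  · rw [mul_comm l l']
    exact prod_range_mul (fun j => Complex.abs (s j)) l

lemma gfun_prod (hne : ∀ i, lam - r i ≠ 0) :
    ∏ j ∈ range (l * l'), gfun r s lam j
      = (∏ i, Complex.abs (lam - r i)) ^ l' / (∏ j, Complex.abs (s j)) ^ l := by
  unfold gfun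
  rw [Finset.prod_div_distrib]
  have hshift : ∏ j ∈ range (l * l'), Complex.abs (lam - r ↑(j + 1))
      = ∏ j ∈ range (l * l'), Complex.abs (lam - r ↑j) := by
    have := prod_block (fun j => Complex.abs (lam - r ↑j)) (l * l')
      (fun n => by rw [cast_period_l])
      (fun n => by
        simp only [ne_eq, map_eq_zero]
        exact hne _) 1
    calc ∏ j ∈ range (l * l'), Complex.abs (lam - r ↑(j + 1))
        = ∏ j ∈ range (l * l'), Complex.abs (lam - r ↑(1 + j)) := by
          apply Finset.prod_congr rfl
          intro j _
          rw [Nat.add_comm]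
      _ = ∏ j ∈ range (l * l'), Complex.abs (lam - r ↑j) := this
  rw [hshift]
  congr 1
  · exact prod_range_mul (fun i => Complex.abs (lam - r i)) l'
  · rw [mul_comm l l']
    exact prod_range_mul (fun j => Complex.abs (s j)) l

section Main

variable (B : ZeroAtInftyContinuousMap ℕ ℂ →L[ℂ] ZeroAtInftyContinuousMap ℕ ℂ)

lemma apply0 (hB0 : ∀ x : ZeroAtInftyContinuousMap ℕ ℂ, B x 0 = r 0 * x 0)
    (x : ZeroAtInftyContinuousMap ℕ ℂ) :
    (B - lam • 1) x 0 = (r 0 - lam) * x 0 := by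
  simp only [ContinuousLinearMap.sub_apply, ContinuousLinearMap.smul_apply,
    ContinuousLinearMap.one_apply, ZeroAtInftyContinuousMap.sub_apply,
    ZeroAtInftyContinuousMap.smul_apply, smul_eq_mul, hB0]
  ring

lemma apply1 (hB : ∀ (x : ZeroAtInftyContinuousMap ℕ ℂ) (k : ℕ),
      B x (k + 1) = s (↑k) * x k + r (↑(k + 1)) * x (k + 1))
    (x : ZeroAtInftyContinuousMap ℕ ℂ) (k : ℕ) :
    (B - lam • 1) x (k + 1) = s ↑k * x k + (r ↑(k + 1) - lam) * x (k + 1) := by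
  simp only [ContinuousLinearMap.sub_apply, ContinuousLinearMap.smul_apply,
    ContinuousLinearMap.one_apply, ZeroAtInftyContinuousMap.sub_apply,
    ZeroAtInftyContinuousMap.smul_apply, smul_eq_mul, hB]
  ring

end Main


section Main2

variable (B : ZeroAtInftyContinuousMap ℕ ℂ →L[ℂ] ZeroAtInftyContinuousMap ℕ ℂ)

lemma not_dense_of_lt (hs : ∀ j, s j ≠ 0)
    (hB0 : ∀ x : ZeroAtInftyContinuousMap ℕ ℂ, B x 0 = r 0 * x 0)
    (hB : ∀ (x : ZeroAtInftyContinuousMap ℕ ℂ) (k : ℕ),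
      B x (k + 1) = s (↑k) * x k + r (↑(k + 1)) * x (k + 1))
    (hAC : (∏ i, Complex.abs (lam - r i)) ^ l' < (∏ j, Complex.abs (s j)) ^ l) :
    ¬ DenseRange ⇑(B - lam • 1) := by
  have hl : 0 < l := Nat.pos_of_ne_zero (NeZero.ne l)
  have hl' : 0 < l' := Nat.pos_of_ne_zero (NeZero.ne l')
  have hCpos : (0 : ℝ) < ∏ j, Complex.abs (s j) :=
    Finset.prod_pos fun j _ => AbsoluteValue.pos _ (hs j)
  set y : ℕ → ℂ := fun n => ∏ j ∈ range n, ((lam - r ↑j) / s ↑j) with hydef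
  have hy0 : y 0 = 1 := by simp [hydef]
  have hysucc : ∀ k, y (k + 1) = y k * ((lam - r ↑k) / s ↑k) := by
    intro k
    rw [hydef]
    exact Finset.prod_range_succ _ k
  have hyabs : ∀ n, Complex.abs (y n) = ∏ j ∈ range n, ffun r s lam j := by
    intro n
    rw [hydef]
    simp only []
    rw [map_prod]
    exact Finset.prod_congr rfl fun j _ => map_div₀ Complex.abs _ _
  have hsum : Summable fun n => Complex.abs (y n) := by
    by_cases hzero : ∃ i, lam = r i
    · obtain ⟨i, hi⟩ := hzero
      apply summable_of_ne_finset_zero (s := range (i.val + 1))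
      intro n hn
      rw [Finset.mem_range, not_lt] at hn
      have hyn : y n = 0 := by
        rw [hydef]
        apply Finset.prod_eq_zero (i := i.val) (Finset.mem_range.2 (by omega))
        rw [Fin.cast_val_eq_self, ← hi, sub_self, zero_div]
      simp [hyn]
    · push_neg at hzero
      have hfpos : ∀ n, 0 < ffun r s lam n := by
        intro n
        apply div_pos
        · exact AbsoluteValue.pos _ (sub_ne_zero.2 (hzero _))
        · exact AbsoluteValue.pos _ (hs _)
      have hP : ∏ j ∈ range (l * l'), ffun r s lam j < 1 := by
        rw [ffun_prod]
        rw [div_lt_one (by positivity)]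
        exact hAC
      apply summable_of_periodic_ratio (ffun r s lam) (l * l') (by positivity)
        hfpos (ffun_period r s lam) hP y
      intro n
      rw [hyabs n, hy0, map_one, mul_one]
  set φ := phi y hsum with hφdef
  have hrec : ∀ k, y k * (r ↑k - lam) + y (k + 1) * s ↑k = 0 := by
    intro k
    rw [hysucc k, mul_assoc, div_mul_cancel₀ _ (hs (↑k))]
    ring
  have hδ : ∀ n, (φ.comp (B - lam • 1)) (delta n) = 0 := by
    intro n
    rw [ContinuousLinearMap.comp_apply, hφdef, phi_apply]
    have hvanish : ∀ j ∉ ({n, n + 1} : Finset ℕ), y j * ((B - lam • 1) (delta n)) j = 0 := by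
      intro j hj
      simp only [Finset.mem_insert, Finset.mem_singleton, not_or] at hj
      obtain ⟨hj1, hj2⟩ := hj
      cases j with
      | zero =>
        rw [apply0 r lam B hB0]
        have h0n : ¬((0 : ℕ) = n) := fun h => hj1 h
        simp [delta_apply, h0n]
      | succ m =>
        rw [apply1 r s lam B hB]
        have hmn : ¬(m = n) := fun h => hj2 (by omega)
        have hmn1 : ¬(m + 1 = n) := fun h => hj1 h
        simp [delta_apply, hmn, hmn1]
    rw [tsum_eq_sum hvanish]
    have hnn : n ∉ ({n + 1} : Finset ℕ) := by simp
    rw [Finset.sum_insert hnn, Finset.sum_singleton]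
    have e1 : ((B - lam • 1) (delta n)) n = r ↑n - lam := by
      cases n with
      | zero =>
        rw [apply0 r lam B hB0]
        simp [delta_apply]
      | succ m =>
        rw [apply1 r s lam B hB]
        have : ¬(m = m + 1) := by omega
        simp [delta_apply, this]
    have e2 : ((B - lam • 1) (delta n)) (n + 1) = s ↑n := by
      rw [apply1 r s lam B hB]
      have : ¬(n + 1 = n) := by omega
      simp [delta_apply, this]
    rw [e1, e2]
    have := hrec n
    linear_combination this
  have hψ : ∀ x, φ ((B - lam • 1) x) = 0 := by
    have hz := eq_zero_of_delta (φ.comp (B - lam • 1)) hδ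
    intro x
    have : (φ.comp (B - lam • 1)) x = 0 := by rw [hz]; rfl
    rwa [ContinuousLinearMap.comp_apply] at this
  intro hd
  have hclosed : IsClosed (φ ⁻¹' {0}) := isClosed_singleton.preimage φ.continuous
  have hsubs : Set.range ⇑(B - lam • 1) ⊆ φ ⁻¹' {0} := by
    rintro v ⟨x, rfl⟩
    exact hψ x
  have hcl : closure (Set.range ⇑(B - lam • 1)) ⊆ φ ⁻¹' {0} :=
    closure_minimal hsubs hclosed
  have h0 : φ (delta 0) = 0 := hcl (hd (delta 0))
  have h1 : φ (delta 0) = 1 := by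
    rw [hφdef, phi_apply]
    have hvan : ∀ j ∉ ({0} : Finset ℕ), y j * (delta 0) j = 0 := by
      intro j hj
      simp only [Finset.mem_singleton] at hj
      simp [delta_apply, hj]
    rw [tsum_eq_sum hvan, Finset.sum_singleton]
    simp [delta_apply, hy0]
  rw [h0] at h1
  exact one_ne_zero h1.symm

end Main2


section Main3

variable (B : ZeroAtInftyContinuousMap ℕ ℂ →L[ℂ] ZeroAtInftyContinuousMap ℕ ℂ)

lemma injective_of_lt (hs : ∀ j, s j ≠ 0)
    (hB0 : ∀ x : ZeroAtInftyContinuousMap ℕ ℂ, B x 0 = r 0 * x 0)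
    (hB : ∀ (x : ZeroAtInftyContinuousMap ℕ ℂ) (k : ℕ),
      B x (k + 1) = s (↑k) * x k + r (↑(k + 1)) * x (k + 1))
    (hAC : (∏ i, Complex.abs (lam - r i)) ^ l' < (∏ j, Complex.abs (s j)) ^ l) :
    Function.Injective ⇑(B - lam • 1) := by
  have hl : 0 < l := Nat.pos_of_ne_zero (NeZero.ne l)
  have hl' : 0 < l' := Nat.pos_of_ne_zero (NeZero.ne l')
  have hCpos : (0 : ℝ) < ∏ j, Complex.abs (s j) :=
    Finset.prod_pos fun j _ => AbsoluteValue.pos _ (hs j)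
  refine (injective_iff_map_eq_zero (B - lam • 1)).2 ?_
  intro x hx
  have hx0 : (r 0 - lam) * x 0 = 0 := by
    rw [← apply0 r lam B hB0 x, hx]
    rfl
  have hxk : ∀ k : ℕ, s ↑k * x k + (r ↑(k + 1) - lam) * x (k + 1) = 0 := by
    intro k
    rw [← apply1 r s lam B hB x k, hx]
    rfl
  have hback : ∀ k, x (k + 1) = 0 → x k = 0 := by
    intro k h
    have h2 := hxk k
    rw [h, mul_zero, add_zero] at h2
    rcases mul_eq_zero.1 h2 with h' | h'
    · exact absurd h' (hs _)
    · exact h'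
  have hdesc : ∀ d k, x (k + d) = 0 → x k = 0 := by
    intro d
    induction d with
    | zero => intro k h; simpa using h
    | succ d ih =>
      intro k h
      apply ih
      apply hback
      rw [show k + d + 1 = k + (d + 1) by ring]
      exact h
  suffices hall : ∀ k, x k = 0 by
    ext k
    simpa using hall k
  by_cases hzero : ∃ i, lam = r i
  · obtain ⟨i, hi⟩ := hzero
    intro k
    have hmul : k + 1 ≤ (k + 1) * l := Nat.le_mul_of_pos_right _ hl
    set m' : ℕ := i.val + (k + 1) * l - 1 with hm'
    have hkm' : k ≤ m' := by omega
    have hcast : ((m' + 1 : ℕ) : Fin l) = i := by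
      have : m' + 1 = i.val + (k + 1) * l := by omega
      rw [this]
      push_cast
      simp [Fin.natCast_self, Fin.cast_val_eq_self]
    have h2 := hxk m'
    rw [hcast, ← hi, sub_self, zero_mul, add_zero] at h2
    have hxm' : x m' = 0 := by
      rcases mul_eq_zero.1 h2 with h' | h'
      · exact absurd h' (hs _)
      · exact h'
    apply hdesc (m' - k) k
    rw [show k + (m' - k) = m' by omega]
    exact hxm'
  · push_neg at hzero
    have hne : ∀ i, lam - r i ≠ 0 := fun i => sub_ne_zero.2 (hzero i)
    have hgpos : ∀ n, 0 < gfun r s lam n := by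
      intro n
      apply div_pos
      · exact AbsoluteValue.pos _ (hne _)
      · exact AbsoluteValue.pos _ (hs _)
    set Q : ℝ := ∏ j ∈ range (l * l'), gfun r s lam j with hQdef
    have hQpos : 0 < Q := Finset.prod_pos fun j _ => hgpos j
    have hQ : Q < 1 := by
      rw [hQdef, gfun_prod r s lam hne, div_lt_one (by positivity)]
      exact hAC
    have hrel : ∀ k, Complex.abs (x k) = gfun r s lam k * Complex.abs (x (k + 1)) := by
      intro k
      have h2 : s ↑k * x k = (lam - r ↑(k + 1)) * x (k + 1) := by
        linear_combination hxk k
      have h3 : Complex.abs (s ↑k) * Complex.abs (x k)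
          = Complex.abs (lam - r ↑(k + 1)) * Complex.abs (x (k + 1)) := by
        rw [← map_mul, ← map_mul, h2]
      unfold gfun
      rw [div_mul_eq_mul_div, eq_div_iff (AbsoluteValue.ne_zero _ (hs _))]
      linarith
    have hprod : ∀ n, Complex.abs (x 0)
        = (∏ j ∈ range n, gfun r s lam j) * Complex.abs (x n) := by
      intro n
      induction n with
      | zero => simp
      | succ n ih =>
        rw [hrel n] at ih
        rw [Finset.prod_range_succ, ih]
        ring
    have hbound : ∀ q, Complex.abs (x 0) ≤ Q ^ q * ‖x‖ := by
      intro q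
      rw [hprod (q * (l * l'))]
      rw [prod_range_mul_of_periodic (gfun r s lam) (l * l') (gfun_period r s lam)
        (fun n => (hgpos n).ne') q]
      exact mul_le_mul_of_nonneg_left (norm_apply_le x _) (pow_nonneg hQpos.le q)
    have htend : Tendsto (fun q => Q ^ q * ‖x‖) atTop (𝓝 0) := by
      have := (tendsto_pow_atTop_nhds_zero_of_lt_one hQpos.le hQ).mul_const ‖x‖
      rwa [zero_mul] at this
    have hle : Complex.abs (x 0) ≤ 0 := ge_of_tendsto' htend hbound
    have hx00 : x 0 = 0 := by
      have := AbsoluteValue.nonneg Complex.abs (x 0)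
      have heq : Complex.abs (x 0) = 0 := le_antisymm hle this
      exact (map_eq_zero _).1 heq
    intro k
    induction k with
    | zero => exact hx00
    | succ k ih =>
      have h2 := hxk k
      rw [ih, mul_zero, zero_add] at h2
      rcases mul_eq_zero.1 h2 with h' | h'
      · exfalso
        apply hne ↑(k + 1)
        linear_combination -h'
      · exact h'

end Main3


lemma sum_smul_delta_apply (c : ℕ → ℂ) (N j : ℕ) :
    (∑ k ∈ range N, c k • delta k) j = if j < N then c j else 0 := by
  rw [sum_apply]
  simp only [ZeroAtInftyContinuousMap.smul_apply, delta_apply, smul_eq_mul]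
  simp only [mul_ite, mul_one, mul_zero]
  rw [Finset.sum_ite_eq (range N) j c]
  simp [Finset.mem_range]

section Main4

variable (B : ZeroAtInftyContinuousMap ℕ ℂ →L[ℂ] ZeroAtInftyContinuousMap ℕ ℂ)

lemma dense_of_ge (hs : ∀ j, s j ≠ 0)
    (hB0 : ∀ x : ZeroAtInftyContinuousMap ℕ ℂ, B x 0 = r 0 * x 0)
    (hB : ∀ (x : ZeroAtInftyContinuousMap ℕ ℂ) (k : ℕ),
      B x (k + 1) = s (↑k) * x k + r (↑(k + 1)) * x (k + 1))
    (hge : (∏ j, Complex.abs (s j)) ^ l ≤ (∏ i, Complex.abs (lam - r i)) ^ l') :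
    DenseRange ⇑(B - lam • 1) := by
  have hl : 0 < l := Nat.pos_of_ne_zero (NeZero.ne l)
  have hl' : 0 < l' := Nat.pos_of_ne_zero (NeZero.ne l')
  have hCpos : (0 : ℝ) < ∏ j, Complex.abs (s j) :=
    Finset.prod_pos fun j _ => AbsoluteValue.pos _ (hs j)
  have hApos : (0 : ℝ) < ∏ i, Complex.abs (lam - r i) := by
    rcases (Finset.prod_nonneg fun i _ => AbsoluteValue.nonneg _ _ :
      (0:ℝ) ≤ ∏ i, Complex.abs (lam - r i)).eq_or_lt with h | h
    · exfalso
      rw [← h, zero_pow hl'.ne'] at hge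
      have := pow_pos hCpos l
      linarith
    · exact h
  have hne : ∀ i, lam - r i ≠ 0 := by
    intro i h
    have : ∏ i, Complex.abs (lam - r i) = 0 :=
      Finset.prod_eq_zero (Finset.mem_univ i) (by rw [h, map_zero])
    linarith
  have hfpos : ∀ n, 0 < ffun r s lam n := by
    intro n
    apply div_pos
    · exact AbsoluteValue.pos _ (hne _)
    · exact AbsoluteValue.pos _ (hs _)
  have hQ1 : 1 ≤ ∏ j ∈ range (l * l'), ffun r s lam j := by
    rw [ffun_prod, le_div_iff₀ (by positivity), one_mul]
    exact hge
  by_contra hnd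
  simp only [DenseRange, Dense, not_forall] at hnd
  obtain ⟨x₀, hx₀⟩ := hnd
  set S : Submodule ℂ (ZeroAtInftyContinuousMap ℕ ℂ) := LinearMap.range ((B - lam • (1 : ZeroAtInftyContinuousMap ℕ ℂ →L[ℂ] ZeroAtInftyContinuousMap ℕ ℂ)) : ZeroAtInftyContinuousMap ℕ ℂ →ₗ[ℂ] ZeroAtInftyContinuousMap ℕ ℂ) with hS
  obtain ⟨φ, hφ0, hφx⟩ := exists_functional S x₀ (by
    rw [hS, LinearMap.coe_range]
    exact hx₀)
  set y : ℕ → ℂ := fun n => φ (delta n) with hy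
  have hrange : ∀ x, φ ((B - lam • 1) x) = 0 := fun x => hφ0 _ (LinearMap.mem_range.2 ⟨x, rfl⟩)
  have hcomb : ∀ n, (B - lam • 1) (delta n)
      = (r ↑n - lam) • delta n + s ↑n • delta (n + 1) := by
    intro n
    ext j
    rw [ZeroAtInftyContinuousMap.add_apply, ZeroAtInftyContinuousMap.smul_apply,
      ZeroAtInftyContinuousMap.smul_apply, smul_eq_mul, smul_eq_mul]
    cases j with
    | zero =>
      rw [apply0 r lam B hB0]
      by_cases h0n : n = 0
      · subst h0n
        simp [delta_apply]
      · have h1 : ¬((0:ℕ) = n) := fun h => h0n h.symm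
        have h2 : ¬((0:ℕ) = n + 1) := by omega
        simp [delta_apply, h1, h2]
    | succ m =>
      rw [apply1 r s lam B hB]
      by_cases h1 : m = n
      · subst h1
        have h2 : ¬(m + 1 = m) := by omega
        simp [delta_apply, h2]
      · by_cases h2 : m + 1 = n
        · subst h2
          have h3 : ¬(m = m + 1) := by omega
          have h4 : ¬(m + 1 = m + 1 + 1) := by omega
          simp [delta_apply, h3, h4]
        · have h3 : ¬(m + 1 = n + 1) := by omega
          simp [delta_apply, h1, h2, h3]
  have hrec : ∀ n : ℕ, (r ↑n - lam) * y n + s ↑n * y (n + 1) = 0 := by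
    intro n
    have h0 := hrange (delta n)
    rw [hcomb n, map_add, map_smul, map_smul, smul_eq_mul, smul_eq_mul] at h0
    exact h0
  have habs : ∀ n, Complex.abs (y (n + 1)) = ffun r s lam n * Complex.abs (y n) := by
    intro n
    have h2 : s ↑n * y (n + 1) = (lam - r ↑n) * y n := by linear_combination hrec n
    have h3 : Complex.abs (s ↑n) * Complex.abs (y (n + 1))
        = Complex.abs (lam - r ↑n) * Complex.abs (y n) := by
      rw [← map_mul, ← map_mul, h2]
    unfold ffun
    rw [div_mul_eq_mul_div, eq_div_iff (AbsoluteValue.ne_zero _ (hs _))]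
    linarith
  have hyabs := abs_rec (ffun r s lam) y habs
  by_cases hy0 : y 0 = 0
  · have hzero : ∀ n, φ (delta n) = 0 := by
      intro n
      have h4 := hyabs n
      rw [show y 0 = 0 from hy0, map_zero, mul_zero] at h4
      have : y n = 0 := (map_eq_zero _).1 h4
      rwa [hy] at this
    have := eq_zero_of_delta φ hzero
    rw [this] at hφx
    simp at hφx
  · have hy0pos : 0 < Complex.abs (y 0) := AbsoluteValue.pos _ hy0
    have hylb : ∀ q, Complex.abs (y 0) ≤ Complex.abs (y (q * (l * l'))) := by
      intro q
      rw [hyabs (q * (l * l')),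
        prod_range_mul_of_periodic (ffun r s lam) (l * l') (ffun_period r s lam)
          (fun n => (hfpos n).ne') q]
      have h1 : 1 ≤ (∏ j ∈ range (l * l'), ffun r s lam j) ^ q := one_le_pow₀ hQ1
      nlinarith
    have hyne : ∀ n, y n ≠ 0 := by
      intro n h
      have h4 := hyabs n
      rw [h, map_zero] at h4
      have hp : 0 < ∏ j ∈ range n, ffun r s lam j := Finset.prod_pos fun j _ => hfpos j
      nlinarith
    set c : ℕ → ℂ := fun n => (Complex.abs (y n) : ℂ) / y n with hc
    have hcabs : ∀ n, Complex.abs (c n) = 1 := by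
      intro n
      rw [hc]
      simp only [map_div₀, Complex.abs_ofReal]
      rw [abs_of_nonneg (Complex.abs.nonneg (y n))]
      exact div_self (Complex.abs.ne_zero (hyne n))
    have hcy : ∀ n, c n * y n = (Complex.abs (y n) : ℂ) := by
      intro n
      rw [hc]
      exact div_mul_cancel₀ _ (hyne n)
    have hb : ∀ q : ℕ, (q + 1 : ℝ) * Complex.abs (y 0) ≤ ‖φ‖ := by
      intro q
      set N : ℕ := q * (l * l') + 1 with hN
      set xq : ZeroAtInftyContinuousMap ℕ ℂ := ∑ k ∈ range N, c k • delta k with hxq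
      have hxqnorm : ‖xq‖ ≤ 1 := by
        apply norm_le_of_forall zero_le_one
        intro j
        rw [hxq, sum_smul_delta_apply]
        by_cases hj : j < N
        · rw [if_pos hj, hcabs]
        · rw [if_neg hj, map_zero]
          exact zero_le_one
      have hφxq : φ xq = ((∑ k ∈ range N, Complex.abs (y k) : ℝ) : ℂ) := by
        rw [hxq, map_sum]
        push_cast
        apply Finset.sum_congr rfl
        intro k _
        rw [map_smul, smul_eq_mul]
        exact hcy k
      have hsumlb : (q + 1 : ℝ) * Complex.abs (y 0) ≤ ∑ k ∈ range N, Complex.abs (y k) := by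
        have hinj : Set.InjOn (fun j => j * (l * l')) (range (q + 1) : Finset ℕ) := by
          intro a _ b _ hab
          have hT : 0 < l * l' := by positivity
          exact Nat.eq_of_mul_eq_mul_right hT hab
        calc (q + 1 : ℝ) * Complex.abs (y 0)
            = ∑ _j ∈ range (q + 1), Complex.abs (y 0) := by
              rw [Finset.sum_const, Finset.card_range, nsmul_eq_mul]
              push_cast
              ring
          _ ≤ ∑ j ∈ range (q + 1), Complex.abs (y (j * (l * l'))) :=
              Finset.sum_le_sum fun j _ => hylb j
          _ = ∑ k ∈ (range (q + 1)).image (fun j => j * (l * l')), Complex.abs (y k) := by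
              rw [Finset.sum_image (fun a ha b hb hab => hinj ha hb hab)]
          _ ≤ ∑ k ∈ range N, Complex.abs (y k) := by
              apply Finset.sum_le_sum_of_subset_of_nonneg
              · intro k hk
                simp only [Finset.mem_image, Finset.mem_range] at hk
                obtain ⟨j, hj, rfl⟩ := hk
                rw [Finset.mem_range, hN]
                have : j * (l * l') ≤ q * (l * l') := Nat.mul_le_mul_right _ (by omega)
                omega
              · intro k _ _
                exact AbsoluteValue.nonneg _ _
      have hup : Complex.abs (φ xq) ≤ ‖φ‖ := by
        calc Complex.abs (φ xq) = ‖φ xq‖ := rfl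
          _ ≤ ‖φ‖ * ‖xq‖ := φ.le_opNorm xq
          _ ≤ ‖φ‖ * 1 := by
              apply mul_le_mul_of_nonneg_left hxqnorm (norm_nonneg φ)
          _ = ‖φ‖ := mul_one _
      have heq : Complex.abs (φ xq) = ∑ k ∈ range N, Complex.abs (y k) := by
        rw [hφxq, Complex.abs_ofReal]
        exact abs_of_nonneg (Finset.sum_nonneg fun k _ => AbsoluteValue.nonneg _ _)
      rw [heq] at hup
      linarith
    obtain ⟨q, hq⟩ := exists_nat_gt (‖φ‖ / Complex.abs (y 0))
    have hq2 := hb q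
    rw [div_lt_iff₀ hy0pos] at hq
    have : (q : ℝ) * Complex.abs (y 0) ≤ (q + 1 : ℝ) * Complex.abs (y 0) := by nlinarith
    linarith

end Main4


end Stmt8Aux


open Filter Topology

/-- The residual spectrum of `B` on `c₀` (the set of `λ` for which `B - λI` is
injective but does not have dense range) equals
`{λ : (|λ-r₁|⋯|λ-r_l|)^{1/l} < (|s₁|⋯|s_{l'}|)^{1/l'}}`. -/
theorem stmt_8 (l l' : ℕ) [NeZero l] [NeZero l'] (r : Fin l → ℂ) (s : Fin l' → ℂ)
    (hs : ∀ j, s j ≠ 0)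
    (B : ZeroAtInftyContinuousMap ℕ ℂ →L[ℂ] ZeroAtInftyContinuousMap ℕ ℂ)
    (hB0 : ∀ x : ZeroAtInftyContinuousMap ℕ ℂ, B x 0 = r 0 * x 0)
    (hB : ∀ (x : ZeroAtInftyContinuousMap ℕ ℂ) (k : ℕ),
      B x (k + 1) = s (↑k) * x k + r (↑(k + 1)) * x (k + 1)) :
    {lam : ℂ | Function.Injective ⇑(B - lam • 1) ∧ ¬ DenseRange ⇑(B - lam • 1)} =
      {lam : ℂ | (∏ i, ‖lam - r i‖) ^ ((1 : ℝ) / l) <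
        (∏ j, ‖s j‖) ^ ((1 : ℝ) / l')} := by
  ext lam
  simp only [Set.mem_setOf_eq]
  show _ ↔ (∏ i, Complex.abs (lam - r i)) ^ ((1 : ℝ) / l) < (∏ j, Complex.abs (s j)) ^ ((1 : ℝ) / l')
  have hl : 0 < l := Nat.pos_of_ne_zero (NeZero.ne l)
  have hl' : 0 < l' := Nat.pos_of_ne_zero (NeZero.ne l')
  have hA0 : (0:ℝ) ≤ ∏ i, Complex.abs (lam - r i) :=
    Finset.prod_nonneg fun i _ => AbsoluteValue.nonneg _ _
  have hC0 : (0:ℝ) < ∏ j, Complex.abs (s j) :=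
    Finset.prod_pos fun j _ => AbsoluteValue.pos _ (hs j)
  have hiff := Stmt8Aux.rpow_iff hA0 hC0 l l' hl hl'
  constructor
  · rintro ⟨hinj, hnd⟩
    rw [hiff]
    by_contra hc
    push_neg at hc
    exact hnd (Stmt8Aux.dense_of_ge r s lam B hs hB0 hB hc)
  · intro hcond
    have hAC := hiff.1 hcond
    exact ⟨Stmt8Aux.injective_of_lt r s lam B hs hB0 hB hAC,
      Stmt8Aux.not_dense_of_lt r s lam B hs hB0 hB hAC⟩
end
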